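/- arXiv:2403.03151 — 4 statements merged into one kernel-verified Lean document; each statement's English description precedes it below -/
import Mathlib

section
/- Let $m$ be a positive integer and $i, j < m$. Let $I$ be a fixed subset of $\{1,\dots,m\}$ of size $i$, and let $J$ be a uniformly random subset of $\{1,\dots,m\}$ of size $j$. Then $|I \cap J|$ is stochastically dominated by a binomial random variable with parameters $i$ and $\min(j/(m-i), 1)$. -/
open scoped ENNReal Classical

section aux

lemma countL (m j k : ℕ) (I : Finset (Fin m)) (hkj : k ≤ j) :
    ((Finset.univ.powersetCard j).filter (fun J : Finset (Fin m) => (I ∩ J).card = k)).card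
      = I.card.choose k * Iᶜ.card.choose (j - k) := by
  rw [← Finset.card_powersetCard, ← Finset.card_powersetCard, ← Finset.card_product]
  apply Finset.card_bij' (fun J _ => (I ∩ J, J \ I)) (fun P _ => P.1 ∪ P.2)
  · intro J hJ
    simp only [Finset.mem_filter, Finset.mem_powersetCard] at hJ
    obtain ⟨⟨-, hcard⟩, hk⟩ := hJ
    simp only [Finset.mem_product, Finset.mem_powersetCard]
    refine ⟨⟨Finset.inter_subset_left, hk⟩, ?_, ?_⟩
    · intro x hx; simp only [Finset.mem_sdiff] at hx; simp [hx.2]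
    · have : (J \ I).card = J.card - (I ∩ J).card := by
        rw [Finset.inter_comm, Finset.card_sdiff_add_card_inter J I |>.symm] at *
        omega
      rw [this, hcard, hk]
  · intro P hP
    simp only [Finset.mem_product, Finset.mem_powersetCard] at hP
    obtain ⟨⟨h1, h1c⟩, h2, h2c⟩ := hP
    have hdisj : Disjoint P.1 P.2 := by
      refine Finset.disjoint_left.mpr fun x hx hx2 => ?_
      have := h2 hx2; simp at this; exact this (h1 hx)
    simp only [Finset.mem_filter, Finset.mem_powersetCard]
    refine ⟨⟨Finset.subset_univ _, ?_⟩, ?_⟩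
    · rw [Finset.card_union_of_disjoint hdisj, h1c, h2c]; omega
    · have : I ∩ (P.1 ∪ P.2) = P.1 := by
        rw [Finset.inter_union_distrib_left]
        have e1 : I ∩ P.1 = P.1 := Finset.inter_eq_right.mpr h1
        have e2 : I ∩ P.2 = ∅ := by
          refine Finset.eq_empty_of_forall_notMem fun x hx => ?_
          simp only [Finset.mem_inter] at hx
          have := h2 hx.2; simp at this; exact this hx.1
        rw [e1, e2, Finset.union_empty]
      rw [this, h1c]
  · intro J hJ
    simp only [Finset.mem_filter] at hJ
    ext x; simp only [Finset.mem_union, Finset.mem_inter, Finset.mem_sdiff]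
    tauto
  · intro P hP
    simp only [Finset.mem_product, Finset.mem_powersetCard] at hP
    obtain ⟨⟨h1, h1c⟩, h2, h2c⟩ := hP
    have e1 : I ∩ (P.1 ∪ P.2) = P.1 := by
      rw [Finset.inter_union_distrib_left]
      have : I ∩ P.1 = P.1 := Finset.inter_eq_right.mpr h1
      rw [this]
      have : I ∩ P.2 = ∅ := by
        refine Finset.eq_empty_of_forall_notMem fun x hx => ?_
        simp only [Finset.mem_inter] at hx
        have := h2 hx.2; simp at this; exact this hx.1
      rw [this, Finset.union_empty]
    have e2 : (P.1 ∪ P.2) \ I = P.2 := by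
      ext x
      simp only [Finset.mem_sdiff, Finset.mem_union]
      constructor
      · rintro ⟨h | h, hni⟩
        · exact absurd (h1 h) hni
        · exact h
      · intro h
        have := h2 h; simp at this
        exact ⟨Or.inr h, this⟩
    rw [Prod.ext_iff]; exact ⟨e1, e2⟩

lemma pairwiseL (a b : ℕ → ℕ) (N : ℕ) (hb : ∀ k < N, 0 < b k)
    (hcross : ∀ k, k + 1 < N → a (k+1) * b k ≤ a k * b (k+1)) :
    ∀ k l, k ≤ l → l < N → a l * b k ≤ a k * b l := by
  intro k l hkl hlN
  induction l, hkl using Nat.le_induction with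
  | base => exact le_rfl
  | succ l hkl ih =>
    have hl : l < N := by omega
    have h1 : a (l+1) * b k * b l ≤ a k * b (l+1) * b l := by
      calc a (l+1) * b k * b l = (a (l+1) * b l) * b k := by ring
        _ ≤ (a l * b (l+1)) * b k := Nat.mul_le_mul_right _ (hcross l hlN)
        _ = (a l * b k) * b (l+1) := by ring
        _ ≤ (a k * b l) * b (l+1) := Nat.mul_le_mul_right _ (ih hl)
        _ = a k * b (l+1) * b l := by ring
    exact Nat.le_of_mul_le_mul_right h1 (hb l hl)

-- tail inequality

lemma tailL (a b : ℕ → ℕ) (N t : ℕ) (hb : ∀ k < N, 0 < b k)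
    (hcross : ∀ k, k + 1 < N → a (k+1) * b k ≤ a k * b (k+1)) :
    (∑ k ∈ Finset.Ico t N, a k) * (∑ k ∈ Finset.range N, b k)
      ≤ (∑ k ∈ Finset.range N, a k) * (∑ k ∈ Finset.Ico t N, b k) := by
  rcases le_or_gt N t with h | h
  · rw [Finset.Ico_eq_empty (by omega)]; simp
  have hsplit : ∀ c : ℕ → ℕ, ∑ k ∈ Finset.range N, c k
      = (∑ k ∈ Finset.Ico 0 t, c k) + ∑ k ∈ Finset.Ico t N, c k := by
    intro c
    rw [Finset.sum_Ico_consecutive _ (Nat.zero_le t) (le_of_lt h)]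
    rw [Finset.range_eq_Ico]
  rw [hsplit a, hsplit b, Nat.add_mul, Nat.mul_add]
  have key : (∑ k ∈ Finset.Ico t N, a k) * (∑ k ∈ Finset.Ico 0 t, b k)
      ≤ (∑ k ∈ Finset.Ico 0 t, a k) * (∑ k ∈ Finset.Ico t N, b k) := by
    rw [Finset.sum_mul_sum, Finset.sum_mul_sum]
    rw [Finset.sum_comm (s := Finset.Ico 0 t)]
    apply Finset.sum_le_sum
    intro l hl
    apply Finset.sum_le_sum
    intro k hk
    simp only [Finset.mem_Ico] at hl hk
    exact pairwiseL a b N hb hcross k l (by omega) hl.2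
  omega

lemma sumA (i j n : ℕ) :
    (∑ k ∈ Finset.range (i+1), if k ≤ j then i.choose k * n.choose (j-k) else 0)
      = (i + n).choose j := by
  have h1 : (∑ k ∈ Finset.range (i+1), if k ≤ j then i.choose k * n.choose (j-k) else 0)
      = ∑ k ∈ Finset.range (i+j+1), if k ≤ j then i.choose k * n.choose (j-k) else 0 := by
    apply Finset.sum_subset
    · intro x hx; simp only [Finset.mem_range] at *; omega
    · intro x hx hxn
      simp only [Finset.mem_range] at hx hxn
      have : i < x := by omega
      split
      · rw [Nat.choose_eq_zero_of_lt this]; ring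
      · rfl
  have h2 : (∑ k ∈ Finset.range (j+1), i.choose k * n.choose (j-k))
      = ∑ k ∈ Finset.range (i+j+1), if k ≤ j then i.choose k * n.choose (j-k) else 0 := by
    rw [← Finset.sum_subset (Finset.range_subset_range.mpr (by omega : j+1 ≤ i+j+1))
        (fun x _ hx => by rw [if_neg (by simp only [Finset.mem_range] at hx; omega)])]
    apply Finset.sum_congr rfl
    intro x hx
    rw [if_pos (by simp only [Finset.mem_range] at hx; omega)]
  rw [h1, ← h2, Nat.add_choose_eq, Finset.Nat.sum_antidiagonal_eq_sum_range_succ_mk]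

lemma sumB (i j q n : ℕ) (hq : j + q = n) :
    (∑ k ∈ Finset.range (i+1), i.choose k * j^k * q^(i-k)) = n^i := by
  rw [← hq, add_pow]
  apply Finset.sum_congr rfl
  intro k _
  push_cast
  ring

lemma crossL (i j q n : ℕ) (hq : j + q = n) (k : ℕ) (hk : k < i) :
    (if k+1 ≤ j then i.choose (k+1) * n.choose (j-(k+1)) else 0) * (i.choose k * j^k * q^(i-k))
      ≤ (if k ≤ j then i.choose k * n.choose (j-k) else 0) * (i.choose (k+1) * j^(k+1) * q^(i-(k+1))) := by
  split
  case isFalse => simp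
  case isTrue hkj =>
    rw [if_pos (by omega)]
    have key : n.choose (j-(k+1)) * q ≤ n.choose (j-k) * j := by
      obtain ⟨r, hr⟩ : ∃ r, j - k = r + 1 := ⟨j - k - 1, by omega⟩
      have hre : j - (k+1) = r := by omega
      rw [hre, hr]
      calc n.choose r * q ≤ n.choose r * (n - r) :=
            Nat.mul_le_mul_left _ (by omega)
        _ = n.choose (r+1) * (r+1) := (Nat.choose_succ_right_eq n r).symm
        _ ≤ n.choose (r+1) * j := Nat.mul_le_mul_left _ (by omega)
    calc i.choose (k+1) * n.choose (j-(k+1)) * (i.choose k * j^k * q^(i-k))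
        = (n.choose (j-(k+1)) * q) * (i.choose (k+1) * i.choose k * j^k * q^(i-(k+1))) := by
          have h' : i - k = (i - (k+1)) + 1 := by omega
          rw [h']; ring
      _ ≤ (n.choose (j-k) * j) * (i.choose (k+1) * i.choose k * j^k * q^(i-(k+1))) :=
          Nat.mul_le_mul_right _ key
      _ = i.choose k * n.choose (j-k) * (i.choose (k+1) * j^(k+1) * q^(i-(k+1))) := by ring

end aux

lemma termEq (n j q ii k : ℕ) (hne : (n:ℝ≥0∞) ≠ 0) (hk : k ≤ ii) :
    ((j:ℝ≥0∞)/(n:ℝ≥0∞))^k * ((q:ℝ≥0∞)/(n:ℝ≥0∞))^(ii-k) * (ii.choose k : ℕ)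
      = ((ii.choose k * j^k * q^(ii-k) : ℕ) : ℝ≥0∞) / ((n^ii : ℕ) : ℝ≥0∞) := by
  have htop : (n:ℝ≥0∞) ≠ ⊤ := ENNReal.natCast_ne_top n
  have e1 : ((n:ℝ≥0∞)^k)⁻¹ * ((n:ℝ≥0∞)^(ii-k))⁻¹ = ((n:ℝ≥0∞)^ii)⁻¹ := by
    rw [← ENNReal.mul_inv (Or.inl (pow_ne_zero _ hne)) (Or.inl (ENNReal.pow_ne_top htop)),
      ← pow_add, Nat.add_sub_cancel' hk]
  calc ((j:ℝ≥0∞)/(n:ℝ≥0∞))^k * ((q:ℝ≥0∞)/(n:ℝ≥0∞))^(ii-k) * (ii.choose k : ℕ)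
      = ((ii.choose k : ℝ≥0∞) * (j:ℝ≥0∞)^k * (q:ℝ≥0∞)^(ii-k))
          * (((n:ℝ≥0∞)^k)⁻¹ * ((n:ℝ≥0∞)^(ii-k))⁻¹) := by
        rw [div_eq_mul_inv, div_eq_mul_inv, mul_pow, mul_pow, ENNReal.inv_pow, ENNReal.inv_pow]
        ring
    _ = ((ii.choose k : ℝ≥0∞) * (j:ℝ≥0∞)^k * (q:ℝ≥0∞)^(ii-k)) * ((n:ℝ≥0∞)^ii)⁻¹ := by rw [e1]
    _ = ((ii.choose k * j^k * q^(ii-k) : ℕ) : ℝ≥0∞) / ((n^ii : ℕ) : ℝ≥0∞) := by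
        rw [div_eq_mul_inv]; push_cast; ring

lemma natMain (i j q n t : ℕ) (hq : j + q = n) (hj : 1 ≤ j) (hq1 : 1 ≤ q) :
    (∑ k ∈ Finset.Ico t (i+1), if k ≤ j then i.choose k * n.choose (j-k) else 0) * n^i
      ≤ (i+n).choose j * (∑ k ∈ Finset.Ico t (i+1), i.choose k * j^k * q^(i-k)) := by
  have H := tailL (fun k => if k ≤ j then i.choose k * n.choose (j-k) else 0)
    (fun k => i.choose k * j^k * q^(i-k)) (i+1) t
    (fun k hk => Nat.mul_pos (Nat.mul_pos (Nat.choose_pos (by omega))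
      (Nat.pow_pos (n := k) hj)) (Nat.pow_pos (n := i-k) hq1))
    (fun k hk => crossL i j q n hq k (by omega))
  simp only [sumA, sumB i j q n hq] at H
  exact H

/-- **Stochastic domination of the intersection of a fixed and a uniform random subset
by a binomial law.**  `I` is a fixed subset of `{1,…,m}` of size `i`, `J` a uniformly
random subset of size `j`; then `|I ∩ J|` is stochastically dominated by a
`Bin(i, min(j/(m-i), 1))` random variable (the convention `Bin(n,p) = δ_n` for `p > 1`
corresponds to truncating the parameter at `1`). -/
theorem stmt0 (m i j : ℕ) (hm : 0 < m) (hi : i < m) (hj : j < m)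
    (I : Finset (Fin m)) (hI : I.card = i) :
    ∀ t : ℕ,
      (((Finset.univ.powersetCard j).filter
          (fun J : Finset (Fin m) => t ≤ (I ∩ J).card)).card : ℝ≥0∞) /
        ((Finset.univ.powersetCard j : Finset (Finset (Fin m))).card : ℝ≥0∞)
      ≤ ∑ k : Fin (i + 1), (if t ≤ (k : ℕ) then
          PMF.binomial (min ((j : ℝ≥0∞) / ((m - i : ℕ) : ℝ≥0∞)) 1).toNNReal
            (by simpa using ENNReal.toNNReal_mono ENNReal.one_ne_top (min_le_right _ _)) i k
        else 0) := by
  intro t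
  set n : ℕ := m - i with hn
  have hn1 : 1 ≤ n := by omega
  set p : ℝ≥0∞ := min ((j : ℝ≥0∞) / (n : ℝ≥0∞)) 1 with hp
  have hp1 : p ≤ 1 := min_le_right _ _
  have hp1' : p.toNNReal ≤ 1 := by simpa using ENNReal.toNNReal_mono ENNReal.one_ne_top hp1
  have hpc : ((p.toNNReal : NNReal) : ℝ≥0∞) = p := ENNReal.coe_toNNReal (ne_top_of_le_ne_top ENNReal.one_ne_top hp1)
  -- the LHS is at most 1
  have hle1 : (((Finset.univ.powersetCard j).filter
          (fun J : Finset (Fin m) => t ≤ (I ∩ J).card)).card : ℝ≥0∞) /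
        ((Finset.univ.powersetCard j : Finset (Finset (Fin m))).card : ℝ≥0∞) ≤ 1 := by
    apply ENNReal.div_le_of_le_mul
    rw [one_mul]
    exact_mod_cast Finset.card_le_card (Finset.filter_subset _ _)
  -- case t = 0 : RHS = 1
  by_cases ht0 : t = 0
  · subst ht0
    have : ∑ k : Fin (i + 1), (if 0 ≤ (k : ℕ) then
          PMF.binomial p.toNNReal hp1' i k else 0) = 1 := by
      simp only [Nat.zero_le, if_true]
      rw [← tsum_fintype (L := SummationFilter.unconditional _)]
      exact (PMF.binomial p.toNNReal hp1' i).tsum_coe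
    rw [this]
    exact hle1
  -- case t > i : LHS = 0
  by_cases hti : i < t
  · have : ((Finset.univ.powersetCard j).filter
          (fun J : Finset (Fin m) => t ≤ (I ∩ J).card)) = ∅ := by
      apply Finset.filter_false_of_mem
      intro J hJ
      have : (I ∩ J).card ≤ i := hI ▸ Finset.card_le_card Finset.inter_subset_left
      omega
    rw [this]
    simp only [Finset.card_empty, Nat.cast_zero, ENNReal.zero_div]
    exact zero_le
  push_neg at hti
  -- case t > j : LHS = 0
  by_cases htj : j < t
  · have : ((Finset.univ.powersetCard j).filter
          (fun J : Finset (Fin m) => t ≤ (I ∩ J).card)) = ∅ := by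
      apply Finset.filter_false_of_mem
      intro J hJ
      rw [Finset.mem_powersetCard] at hJ
      have : (I ∩ J).card ≤ j := hJ.2 ▸ Finset.card_le_card Finset.inter_subset_right
      omega
    rw [this]
    simp only [Finset.card_empty, Nat.cast_zero, ENNReal.zero_div]
    exact zero_le
  push_neg at htj
  -- case n ≤ j : p = 1 and RHS ≥ 1
  by_cases hnj : n ≤ j
  · have hpmin : p = 1 := min_eq_right (by
      rw [ENNReal.le_div_iff_mul_le (Or.inl (by exact_mod_cast (by omega : n ≠ 0) : (n:ℝ≥0∞) ≠ 0))
        (Or.inl (by simp))]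
      rw [one_mul]; exact_mod_cast hnj)
    refine hle1.trans ?_
    have hterm : (if t ≤ ((Fin.last i : Fin (i+1)) : ℕ) then
        PMF.binomial p.toNNReal hp1' i (Fin.last i) else 0) = 1 := by
      rw [if_pos (by simpa using hti), PMF.binomial_apply_last, hpc, hpmin, one_pow]
    calc (1:ℝ≥0∞) = _ := hterm.symm
      _ ≤ _ := Finset.single_le_sum (f := fun k : Fin (i+1) => if t ≤ (k:ℕ) then
          PMF.binomial p.toNNReal hp1' i k else 0) (fun _ _ => zero_le) (Finset.mem_univ _)
  push_neg at hnj
  -- main case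
  have ht1 : 1 ≤ t := by omega
  have htj' : t ≤ j := by omega
  have hj1 : 1 ≤ j := by omega
  set q : ℕ := n - j with hqdef
  have hqj : j + q = n := by omega
  have hq1 : 1 ≤ q := by omega
  have hne : (n:ℝ≥0∞) ≠ 0 := by exact_mod_cast (by omega : n ≠ 0)
  have htop : (n:ℝ≥0∞) ≠ ⊤ := ENNReal.natCast_ne_top n
  have hpmin : p = (j:ℝ≥0∞)/(n:ℝ≥0∞) := min_eq_left (ENNReal.div_le_of_le_mul
    (by rw [one_mul]; exact_mod_cast le_of_lt hnj))
  have h1p : 1 - p = (q:ℝ≥0∞)/(n:ℝ≥0∞) := by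
    rw [hpmin]
    refine (ENNReal.eq_sub_of_add_eq ?_ ?_).symm
    · exact (ENNReal.div_lt_top (ENNReal.natCast_ne_top j) hne).ne
    · rw [ENNReal.div_add_div_same, ← Nat.cast_add, (by omega : q + j = n),
        ENNReal.div_self hne htop]
  have hNum : ((Finset.univ.powersetCard j).filter
        (fun J : Finset (Fin m) => t ≤ (I ∩ J).card)).card
      = ∑ k ∈ Finset.Ico t (i+1), (if k ≤ j then i.choose k * n.choose (j-k) else 0) := by
    rw [Finset.card_eq_sum_card_fiberwise
      (f := fun J : Finset (Fin m) => (I ∩ J).card) (t := Finset.Ico t (i+1))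
      (by
        intro J hJ
        simp only [Finset.coe_filter, Set.mem_setOf_eq] at hJ
        have : (I ∩ J).card ≤ i := hI ▸ Finset.card_le_card Finset.inter_subset_left
        simp only [Finset.mem_coe, Finset.mem_Ico]
        omega)]
    apply Finset.sum_congr rfl
    intro k hk
    simp only [Finset.mem_Ico] at hk
    rw [Finset.filter_filter]
    have hfe : ((Finset.univ.powersetCard j).filter
          (fun J : Finset (Fin m) => t ≤ (I ∩ J).card ∧ (I ∩ J).card = k))
        = (Finset.univ.powersetCard j).filter (fun J => (I ∩ J).card = k) :=
      Finset.filter_congr (fun J _ => ⟨And.right, fun h => ⟨by omega, h⟩⟩)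
    rw [hfe]
    by_cases hkj : k ≤ j
    · rw [countL m j k I hkj, Finset.card_compl, Fintype.card_fin, hI, if_pos hkj]
    · rw [if_neg hkj, Finset.card_eq_zero.mpr ?_]
      apply Finset.filter_false_of_mem
      intro J hJ
      rw [Finset.mem_powersetCard] at hJ
      have : (I ∩ J).card ≤ j := hJ.2 ▸ Finset.card_le_card Finset.inter_subset_right
      omega
  have hDen : ((Finset.univ.powersetCard j : Finset (Finset (Fin m)))).card = m.choose j := by
    rw [Finset.card_powersetCard, Finset.card_univ, Fintype.card_fin]
  have hRHS : (∑ k : Fin (i + 1), (if t ≤ (k:ℕ) then PMF.binomial p.toNNReal hp1' i k else 0))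
      = ((∑ k ∈ Finset.Ico t (i+1), i.choose k * j^k * q^(i-k) : ℕ) : ℝ≥0∞)
        / ((n^i : ℕ) : ℝ≥0∞) := by
    have step1 : ∀ k : Fin (i+1), (if t ≤ (k:ℕ) then PMF.binomial p.toNNReal hp1' i k else 0)
        = (fun k : ℕ => if t ≤ k then
            ((i.choose k * j^k * q^(i-k) : ℕ) : ℝ≥0∞) / ((n^i : ℕ):ℝ≥0∞) else 0) (k:ℕ) := by
      intro k
      simp only
      by_cases htk : t ≤ (k:ℕ)
      · rw [if_pos htk, if_pos htk, PMF.binomial_apply]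
        have hsub : ((Fin.last i : Fin (i+1)) : ℕ) - (k : ℕ) = i - (k:ℕ) := by
          rw [Fin.val_last]
        rw [hsub, hpc, h1p, hpmin]
        exact termEq n j q i (k:ℕ) hne (Fin.is_le k)
      · rw [if_neg htk, if_neg htk]
    have hfil : (Finset.range (i+1)).filter (fun k => t ≤ k) = Finset.Ico t (i+1) := by
      ext x
      simp only [Finset.mem_filter, Finset.mem_range, Finset.mem_Ico]
      omega
    calc (∑ k : Fin (i + 1), (if t ≤ (k:ℕ) then PMF.binomial p.toNNReal hp1' i k else 0))
        = ∑ k : Fin (i+1), (fun k : ℕ => if t ≤ k then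
            ((i.choose k * j^k * q^(i-k) : ℕ) : ℝ≥0∞) / ((n^i : ℕ):ℝ≥0∞) else 0) (k:ℕ) :=
          Finset.sum_congr rfl (fun k _ => step1 k)
      _ = ∑ k ∈ Finset.range (i+1), (fun k : ℕ => if t ≤ k then
            ((i.choose k * j^k * q^(i-k) : ℕ) : ℝ≥0∞) / ((n^i : ℕ):ℝ≥0∞) else 0) k :=
          Fin.sum_univ_eq_sum_range (fun k : ℕ => if t ≤ k then
            ((i.choose k * j^k * q^(i-k) : ℕ) : ℝ≥0∞) / ((n^i : ℕ):ℝ≥0∞) else 0) (i+1)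
      _ = ∑ k ∈ Finset.Ico t (i+1),
            ((i.choose k * j^k * q^(i-k) : ℕ) : ℝ≥0∞) / ((n^i : ℕ):ℝ≥0∞) := by
          beta_reduce
          rw [← Finset.sum_filter, hfil]
      _ = ((∑ k ∈ Finset.Ico t (i+1), i.choose k * j^k * q^(i-k) : ℕ) : ℝ≥0∞)
            / ((n^i : ℕ) : ℝ≥0∞) := by
          simp only [div_eq_mul_inv]
          rw [← Finset.sum_mul, Nat.cast_sum]
  rw [hNum, hDen, hRHS]
  have hD0 : ((m.choose j : ℕ) : ℝ≥0∞) ≠ 0 := by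
    exact_mod_cast (Nat.choose_pos (by omega : j ≤ m)).ne'
  have hDtop : ((m.choose j : ℕ) : ℝ≥0∞) ≠ ⊤ := ENNReal.natCast_ne_top _
  have hN0 : ((n^i : ℕ) : ℝ≥0∞) ≠ 0 := by
    exact_mod_cast (Nat.pow_pos (n := i) (by omega : 0 < n)).ne'
  have hNtop : ((n^i : ℕ) : ℝ≥0∞) ≠ ⊤ := ENNReal.natCast_ne_top _
  rw [ENNReal.div_le_iff_le_mul (Or.inl hD0) (Or.inl hDtop)]
  have hshuf : (((∑ k ∈ Finset.Ico t (i+1), i.choose k * j^k * q^(i-k) : ℕ) : ℝ≥0∞)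
        / ((n^i : ℕ) : ℝ≥0∞)) * ((m.choose j : ℕ) : ℝ≥0∞)
      = (((∑ k ∈ Finset.Ico t (i+1), i.choose k * j^k * q^(i-k) : ℕ) : ℝ≥0∞)
        * ((m.choose j : ℕ) : ℝ≥0∞)) / ((n^i : ℕ) : ℝ≥0∞) := by
    rw [div_eq_mul_inv, div_eq_mul_inv, mul_right_comm]
  rw [hshuf, ENNReal.le_div_iff_mul_le (Or.inl hN0) (Or.inl hNtop)]
  have hmn : i + n = m := by omega
  have := natMain i j q n t hqj hj1 hq1
  rw [hmn] at this
  calc ((∑ k ∈ Finset.Ico t (i+1),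
          if k ≤ j then i.choose k * n.choose (j-k) else 0 : ℕ) : ℝ≥0∞) * ((n^i : ℕ) : ℝ≥0∞)
      = (((∑ k ∈ Finset.Ico t (i+1),
          if k ≤ j then i.choose k * n.choose (j-k) else 0) * n^i : ℕ) : ℝ≥0∞) := by push_cast; ring
    _ ≤ ((m.choose j * (∑ k ∈ Finset.Ico t (i+1), i.choose k * j^k * q^(i-k)) : ℕ) : ℝ≥0∞) := by
        exact_mod_cast this
    _ = _ := by push_cast; ring
end

section
/- Let $\mathcal{P}_- \subseteq \mathcal{P}_+$ be two finite sets of points in the plane with pairwise distinct $x$-coordinates and pairwise distinct $y$-coordinates. Then for any chain $C$ of the binary search tree $\mathrm{BST}(\mathcal{P}_+)$, the set $C \cap \mathcal{P}_-$ is a chain of $\mathrm{BST}(\mathcal{P}_-)$. -/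
/-- Binary trees with real labels. -/
inductive BTree where
  | leaf : BTree
  | node : BTree → ℝ → BTree → BTree

namespace BTree

/-- Insertion of a value into a binary search tree. -/
noncomputable def insert (x : ℝ) : BTree → BTree
  | leaf => node leaf x leaf
  | node l y r => if x < y then node (insert x l) y r else node l y (insert x r)

/-- Number of nodes. -/
def size : BTree → ℕ
  | leaf => 0
  | node l _ r => size l + 1 + size r

/-- Number of nodes on a longest root-to-leaf path. -/
def depth : BTree → ℕ
  | leaf => 0
  | node l _ r => 1 + max (depth l) (depth r)

/-- Height: maximal number of edges from the root to a leaf (`-1` for the empty tree). -/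
def height (t : BTree) : ℤ := (depth t : ℤ) - 1

/-- The value `x` is a label of the tree. -/
def Mem (x : ℝ) : BTree → Prop
  | leaf => False
  | node l y r => x = y ∨ Mem x l ∨ Mem x r

/-- The node labeled `a` is a (strict) ancestor of the node labeled `b`. -/
def IsAncestor (a b : ℝ) : BTree → Prop
  | leaf => False
  | node l y r => (a = y ∧ (Mem b l ∨ Mem b r)) ∨ IsAncestor a b l ∨ IsAncestor a b r

/-- A set of labels is a chain if any two of its nodes are comparable for the
ancestor relation. -/
def IsChain (t : BTree) (C : Set ℝ) : Prop :=
  ∀ a ∈ C, ∀ b ∈ C, a = b ∨ IsAncestor a b t ∨ IsAncestor b a t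

end BTree

/-- The binary search tree obtained by inserting the elements of a list in order. -/
noncomputable def bstOfList (l : List ℝ) : BTree := l.foldl (fun t x => t.insert x) .leaf

/-- The BST of a list of planar points, already sorted by increasing `x`-coordinate:
insert the `y`-coordinates in order. -/
noncomputable def bstOfSortedPts (l : List (ℝ × ℝ)) : BTree := bstOfList (l.map Prod.snd)

open scoped Classical in
/-- The BST of a finite set of planar points, given as a list: sort the points by
increasing `x`-coordinate and insert the `y`-coordinates in this order. -/
noncomputable def bstOfPts (l : List (ℝ × ℝ)) : BTree :=
  bstOfSortedPts (l.mergeSort (fun p q => decide (p.1 ≤ q.1)))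

open scoped Classical in
/-- Length of a longest increasing subsequence of `f`. -/
noncomputable def lisLen {n : ℕ} {β : Type*} [Preorder β] (f : Fin n → β) : ℕ :=
  Finset.univ.sup fun s : Finset (Fin n) => if StrictMonoOn f ↑s then s.card else 0

open scoped Classical in
/-- Length of a longest decreasing subsequence of `f`. -/
noncomputable def ldsLen {n : ℕ} {β : Type*} [Preorder β] (f : Fin n → β) : ℕ :=
  Finset.univ.sup fun s : Finset (Fin n) => if StrictAntiOn f ↑s then s.card else 0

namespace Stmt5Aux

open BTree

lemma anc_mem {a b : ℝ} : ∀ t : BTree, IsAncestor a b t → Mem a t ∧ Mem b t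
  | .leaf, h => h.elim
  | .node l y r, h => by
    rcases h with ⟨rfl, hb⟩ | h | h
    · exact ⟨Or.inl rfl, Or.inr hb⟩
    · have := anc_mem l h; exact ⟨Or.inr (Or.inl this.1), Or.inr (Or.inl this.2)⟩
    · have := anc_mem r h; exact ⟨Or.inr (Or.inr this.1), Or.inr (Or.inr this.2)⟩

lemma foldl_node (xs : List ℝ) : ∀ (tl tr : BTree) (y : ℝ),
    xs.foldl (fun t x => BTree.insert x t) (BTree.node tl y tr) =
      BTree.node ((xs.filter (fun x => decide (x < y))).foldl (fun t x => BTree.insert x t) tl) y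
        ((xs.filter (fun x => decide (¬ x < y))).foldl (fun t x => BTree.insert x t) tr) := by
  induction xs with
  | nil => intro tl tr y; simp
  | cons x xs ih =>
    intro tl tr y
    by_cases h : x < y
    · simp [List.foldl_cons, BTree.insert, h, List.filter_cons, ih]
    · simp [List.foldl_cons, BTree.insert, h, List.filter_cons, ih, not_lt.mp h]

lemma bstOfList_cons (y : ℝ) (xs : List ℝ) :
    bstOfList (y :: xs) =
      .node (bstOfList (xs.filter (fun x => decide (x < y)))) y
        (bstOfList (xs.filter (fun x => decide (¬ x < y)))) := by
  unfold bstOfList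
  rw [List.foldl_cons]
  show xs.foldl (fun t x => BTree.insert x t) (BTree.node .leaf y .leaf) = _
  exact foldl_node xs .leaf .leaf y

lemma mem_bst : ∀ (l : List ℝ) (x : ℝ), Mem x (bstOfList l) ↔ x ∈ l
  | [], x => by simp [bstOfList, Mem]
  | y :: xs, x => by
    rw [bstOfList_cons]
    have h1 := mem_bst (xs.filter (fun x => decide (x < y))) x
    have h2 := mem_bst (xs.filter (fun x => decide (¬ x < y))) x
    simp only [Mem, h1, h2, List.mem_filter, List.mem_cons, decide_eq_true_eq]
    by_cases hx : x < y <;> tauto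
  termination_by l => l.length
  decreasing_by
    · exact Nat.lt_succ_of_le (List.length_filter_le _ _)
    · exact Nat.lt_succ_of_le (List.length_filter_le _ _)

/-- `Good a b l`: no element of `l` strictly between `a` and `b` occurs before both
`a` and `b`. -/
def Good (a b : ℝ) : List ℝ → Prop
  | [] => True
  | c :: l => c = a ∨ c = b ∨ ((c ≤ min a b ∨ max a b ≤ c) ∧ Good a b l)

lemma good_filter {a b : ℝ} (p : ℝ → Bool)
    (h : ∀ c : ℝ, p c = false → (c ≤ min a b ∨ max a b ≤ c) ∧ c ≠ a ∧ c ≠ b) :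
    ∀ l : List ℝ, (Good a b (l.filter p) ↔ Good a b l)
  | [] => Iff.rfl
  | c :: l => by
    have ih := good_filter p h l
    by_cases hc : p c = true
    · rw [List.filter_cons_of_pos hc]
      simp only [Good]
      tauto
    · rw [List.filter_cons_of_neg hc]
      have hh := h c (by simpa using hc)
      simp only [Good]
      constructor
      · intro hg; exact Or.inr (Or.inr ⟨hh.1, ih.mp hg⟩)
      · rintro (rfl | rfl | ⟨_, hg⟩)
        · exact absurd rfl hh.2.1
        · exact absurd rfl hh.2.2
        · exact ih.mpr hg

lemma good_sublist {a b : ℝ} {lm lp : List ℝ} (h : lm.Sublist lp) :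
    lp.Nodup → a ∈ lm → b ∈ lm → Good a b lp → Good a b lm := by
  induction h with
  | slnil => exact fun _ _ _ _ => trivial
  | @cons l₁ l₂ c h ih =>
    intro hnd ha hb hg
    have hnd' := (List.nodup_cons.mp hnd)
    rcases hg with rfl | rfl | ⟨_, hg⟩
    · exact absurd (h.subset ha) hnd'.1
    · exact absurd (h.subset hb) hnd'.1
    · exact ih hnd'.2 ha hb hg
  | @cons_cons l₁ l₂ c h ih =>
    intro hnd ha hb hg
    have hnd' := (List.nodup_cons.mp hnd)
    by_cases hca : c = a
    · exact Or.inl hca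
    by_cases hcb : c = b
    · exact Or.inr (Or.inl hcb)
    rcases hg with rfl | rfl | ⟨hcond, hg⟩
    · exact absurd rfl hca
    · exact absurd rfl hcb
    have ha' : a ∈ l₁ := (List.mem_cons.mp ha).resolve_left (fun h => hca h.symm)
    have hb' : b ∈ l₁ := (List.mem_cons.mp hb).resolve_left (fun h => hcb h.symm)
    exact Or.inr (Or.inr ⟨hcond, ih hnd'.2 ha' hb' hg⟩)

set_option maxHeartbeats 1000000 in
lemma comp_iff : ∀ (l : List ℝ) (a b : ℝ), a ∈ l → b ∈ l → a ≠ b →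
    ((IsAncestor a b (bstOfList l) ∨ IsAncestor b a (bstOfList l)) ↔ Good a b l)
  | [], a, b, ha, _, _ => absurd ha List.not_mem_nil
  | y :: xs, a, b, ha, hb, hab => by
    rw [bstOfList_cons]
    set P : ℝ → Bool := fun x => decide (x < y) with hP
    set Q : ℝ → Bool := fun x => decide (¬ x < y) with hQ
    set L := bstOfList (xs.filter P) with hL
    set R := bstOfList (xs.filter Q) with hR
    have memL : ∀ z : ℝ, Mem z L ↔ (z ∈ xs ∧ z < y) := by
      intro z; rw [hL, mem_bst, List.mem_filter]; simp [hP]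
    have memR : ∀ z : ℝ, Mem z R ↔ (z ∈ xs ∧ ¬ z < y) := by
      intro z; rw [hR, mem_bst, List.mem_filter]; simp [hQ]
    by_cases hay : a = y
    · subst hay
      have hbxs : b ∈ xs := by
        rcases List.mem_cons.mp hb with rfl | h'
        · exact absurd rfl hab.symm
        · exact h'
      refine iff_of_true (Or.inl (Or.inl ⟨rfl, ?_⟩)) (Or.inl rfl)
      by_cases hby : b < a
      · exact Or.inl ((memL b).mpr ⟨hbxs, hby⟩)
      · exact Or.inr ((memR b).mpr ⟨hbxs, hby⟩)
    by_cases hby : b = y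
    · subst hby
      have haxs : a ∈ xs := by
        rcases List.mem_cons.mp ha with rfl | h'
        · exact absurd rfl hab
        · exact h'
      refine iff_of_true (Or.inr (Or.inl ⟨rfl, ?_⟩)) (Or.inr (Or.inl rfl))
      by_cases h' : a < b
      · exact Or.inl ((memL a).mpr ⟨haxs, h'⟩)
      · exact Or.inr ((memR a).mpr ⟨haxs, h'⟩)
    have haxs : a ∈ xs := by
      rcases List.mem_cons.mp ha with rfl | h'
      · exact absurd rfl hay
      · exact h'
    have hbxs : b ∈ xs := by
      rcases List.mem_cons.mp hb with rfl | h'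
      · exact absurd rfl hby
      · exact h'
    by_cases haY : a < y <;> by_cases hbY : b < y
    · -- both below y: reduce to the left subtree
      have ihL := comp_iff (xs.filter P) a b
        (List.mem_filter.mpr ⟨haxs, by simp [hP, haY]⟩)
        (List.mem_filter.mpr ⟨hbxs, by simp [hP, hbY]⟩) hab
      have hgf : Good a b (xs.filter P) ↔ Good a b xs := by
        refine good_filter P (fun c hc => ?_) xs
        have hyc : y ≤ c := by simpa [hP] using hc
        have h1 : max a b ≤ c := le_trans (le_of_lt (max_lt haY hbY)) hyc
        exact ⟨Or.inr h1, fun h => absurd (h ▸ hyc) (not_le.mpr haY),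
          fun h => absurd (h ▸ hyc) (not_le.mpr hbY)⟩
      have step : (IsAncestor a b (BTree.node L y R) ∨ IsAncestor b a (BTree.node L y R)) ↔
          (IsAncestor a b L ∨ IsAncestor b a L) := by
        constructor
        · rintro ((⟨rfl, _⟩ | h | h) | (⟨rfl, _⟩ | h | h))
          · exact absurd rfl hay
          · exact Or.inl h
          · exact absurd ((memR a).mp (anc_mem R h).1).2 (by simpa using haY)
          · exact absurd rfl hby
          · exact Or.inr h
          · exact absurd ((memR b).mp (anc_mem R h).1).2 (by simpa using hbY)
        · rintro (h | h)
          · exact Or.inl (Or.inr (Or.inl h))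
          · exact Or.inr (Or.inr (Or.inl h))
      rw [step, ihL, hgf]
      simp only [Good]
      have h1 : y ≠ a := fun h => hay h.symm
      have h2 : y ≠ b := fun h => hby h.symm
      have h3 : max a b ≤ y := le_of_lt (max_lt haY hbY)
      tauto
    · -- a below, b above: incomparable and not Good
      have hyb : y < b := lt_of_le_of_ne (not_lt.mp hbY) (fun h => hby h.symm)
      refine iff_of_false ?_ ?_
      · rintro ((⟨rfl, _⟩ | h | h) | (⟨rfl, _⟩ | h | h))
        · exact absurd rfl hay
        · exact absurd ((memL b).mp (anc_mem L h).2).2 hbY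
        · exact absurd ((memR a).mp (anc_mem R h).1).2 (by simpa using haY)
        · exact absurd rfl hby
        · exact absurd ((memL b).mp (anc_mem L h).1).2 hbY
        · exact absurd ((memR a).mp (anc_mem R h).2).2 (by simpa using haY)
      · rintro (rfl | rfl | ⟨(h' | h'), _⟩)
        · exact hay rfl
        · exact hby rfl
        · exact absurd (le_trans h' (min_le_left a b)) (not_le.mpr haY)
        · exact absurd (le_trans (le_max_right a b) h') (not_le.mpr hyb)
    · -- b below, a above
      have hya : y < a := lt_of_le_of_ne (not_lt.mp haY) (fun h => hay h.symm)
      refine iff_of_false ?_ ?_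
      · rintro ((⟨rfl, _⟩ | h | h) | (⟨rfl, _⟩ | h | h))
        · exact absurd rfl hay
        · exact absurd ((memL a).mp (anc_mem L h).1).2 haY
        · exact absurd ((memR b).mp (anc_mem R h).2).2 (by simpa using hbY)
        · exact absurd rfl hby
        · exact absurd ((memL a).mp (anc_mem L h).2).2 haY
        · exact absurd ((memR b).mp (anc_mem R h).1).2 (by simpa using hbY)
      · rintro (rfl | rfl | ⟨(h' | h'), _⟩)
        · exact hay rfl
        · exact hby rfl
        · exact absurd (le_trans h' (min_le_right a b)) (not_le.mpr hbY)
        · exact absurd (le_trans (le_max_left a b) h') (not_le.mpr hya)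
    · -- both above y: reduce to the right subtree
      have hya : y < a := lt_of_le_of_ne (not_lt.mp haY) (fun h => hay h.symm)
      have hyb : y < b := lt_of_le_of_ne (not_lt.mp hbY) (fun h => hby h.symm)
      have ihR := comp_iff (xs.filter Q) a b
        (List.mem_filter.mpr ⟨haxs, by simp only [hQ, decide_eq_true_eq]; exact haY⟩)
        (List.mem_filter.mpr ⟨hbxs, by simp only [hQ, decide_eq_true_eq]; exact hbY⟩) hab
      have hgf : Good a b (xs.filter Q) ↔ Good a b xs := by
        refine good_filter Q (fun c hc => ?_) xs
        have hcy : c < y := by simpa [hQ] using hc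
        have h1 : c ≤ min a b := le_of_lt (lt_of_lt_of_le hcy (le_min (le_of_lt hya) (le_of_lt hyb)))
        exact ⟨Or.inl h1, fun h => absurd (h ▸ hcy) (not_lt.mpr (le_of_lt hya)),
          fun h => absurd (h ▸ hcy) (not_lt.mpr (le_of_lt hyb))⟩
      have step : (IsAncestor a b (BTree.node L y R) ∨ IsAncestor b a (BTree.node L y R)) ↔
          (IsAncestor a b R ∨ IsAncestor b a R) := by
        constructor
        · rintro ((⟨rfl, _⟩ | h | h) | (⟨rfl, _⟩ | h | h))
          · exact absurd rfl hay
          · exact absurd ((memL a).mp (anc_mem L h).1).2 haY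
          · exact Or.inl h
          · exact absurd rfl hby
          · exact absurd ((memL b).mp (anc_mem L h).1).2 hbY
          · exact Or.inr h
        · rintro (h | h)
          · exact Or.inl (Or.inr (Or.inr h))
          · exact Or.inr (Or.inr (Or.inr h))
      rw [step, ihR, hgf]
      simp only [Good]
      have h1 : y ≠ a := fun h => hay h.symm
      have h2 : y ≠ b := fun h => hby h.symm
      have h3 : y ≤ min a b := le_min (le_of_lt hya) (le_of_lt hyb)
      tauto
  termination_by l => l.length
  decreasing_by
    · exact Nat.lt_succ_of_le (List.length_filter_le _ _)
    · exact Nat.lt_succ_of_le (List.length_filter_le _ _)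

end Stmt5Aux

/-- **Restriction of chains of binary search trees of point sets.** If `P₋ ⊆ P₊` are point
sets with distinct `x`- and distinct `y`-coordinates (given as lists sorted by increasing
`x`-coordinate), then for any chain `C` of `BST(P₊)`, the set `C ∩ P₋` is a chain of
`BST(P₋)`. -/
theorem stmt5 (Pp Pm : List (ℝ × ℝ)) (hsub : Pm.Sublist Pp)
    (hxs : Pp.Pairwise (fun p q => p.1 < q.1))
    (hyd : Pp.Pairwise (fun p q => p.2 ≠ q.2))
    (C : Set (ℝ × ℝ)) (hC : C ⊆ {p | p ∈ Pp})
    (hchain : BTree.IsChain (bstOfSortedPts Pp) (Prod.snd '' C)) :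
    BTree.IsChain (bstOfSortedPts Pm) (Prod.snd '' (C ∩ {p | p ∈ Pm})) := by
  rintro a ⟨p, ⟨hpC, hpM⟩, rfl⟩ b ⟨q, ⟨hqC, hqM⟩, rfl⟩
  by_cases hab : p.2 = q.2
  · exact Or.inl hab
  right
  have hcomp := hchain p.2 ⟨p, hpC, rfl⟩ q.2 ⟨q, hqC, rfl⟩
  rcases hcomp with h | h
  · exact absurd h hab
  unfold bstOfSortedPts at h ⊢
  have hyp_nodup : (Pp.map Prod.snd).Nodup := by
    rw [List.Nodup, List.pairwise_map]; exact hyd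
  have hamem : p.2 ∈ Pp.map Prod.snd := List.mem_map_of_mem (hC hpC)
  have hbmem : q.2 ∈ Pp.map Prod.snd := List.mem_map_of_mem (hC hqC)
  have hgood := (Stmt5Aux.comp_iff (Pp.map Prod.snd) p.2 q.2 hamem hbmem hab).mp h
  have hsubm : (Pm.map Prod.snd).Sublist (Pp.map Prod.snd) := hsub.map _
  have hgoodm := Stmt5Aux.good_sublist hsubm hyp_nodup (List.mem_map_of_mem hpM)
    (List.mem_map_of_mem hqM) hgood
  exact (Stmt5Aux.comp_iff (Pm.map Prod.snd) p.2 q.2 (List.mem_map_of_mem hpM)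
    (List.mem_map_of_mem hqM) hab).mpr hgoodm
end

section
/- Let $\mathcal{P}_- \subseteq \mathcal{P}_+$ be two finite sets of points in the plane with pairwise distinct $x$- and $y$-coordinates, and let $\mathcal{C}$ be a chain of maximal size in $\mathrm{BST}(\mathcal{P}_+)$. Then the height of $\mathrm{BST}(\mathcal{P}_-)$ is at least the height of $\mathrm{BST}(\mathcal{P}_+)$ minus $|\mathcal{C} \cap (\mathcal{P}_+ \setminus \mathcal{P}_-)|$. In particular, removing a single point from a point set decreases the BST height by at most 1. -/
-- AUX
section Aux
open scoped Classical
open BTree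

theorem mem_insert' {z x : ℝ} {t : BTree} :
    Mem z (t.insert x) ↔ z = x ∨ Mem z t := by
  induction t with
  | leaf => simp [BTree.insert, Mem]
  | node l y r ihl ihr =>
    simp only [BTree.insert]
    split_ifs with h <;> simp [Mem, ihl, ihr] <;> tauto

theorem mem_foldl {z : ℝ} : ∀ (L : List ℝ) (t : BTree),
    Mem z (L.foldl (fun t x => t.insert x) t) ↔ Mem z t ∨ z ∈ L
  | [], t => by simp
  | x :: L, t => by
    rw [List.foldl_cons, mem_foldl L]
    simp [mem_insert']
    tauto

theorem mem_bstOfList {z : ℝ} {L : List ℝ} : Mem z (bstOfList L) ↔ z ∈ L := by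
  rw [bstOfList, mem_foldl]
  simp [Mem]

def BS : BTree → Prop
  | .leaf => True
  | .node l y r => (∀ z, Mem z l → z < y) ∧ (∀ z, Mem z r → y < z) ∧ BS l ∧ BS r

theorem bs_insert {x : ℝ} {t : BTree} (hx : ¬ Mem x t) (h : BS t) : BS (t.insert x) := by
  induction t with
  | leaf => simp [BTree.insert, BS, Mem]
  | node l y r ihl ihr =>
    simp only [Mem] at hx
    push_neg at hx
    obtain ⟨h1, h2, h3, h4⟩ := h
    simp only [BTree.insert]
    split_ifs with hlt
    · refine ⟨fun z hz => ?_, h2, ihl hx.2.1 h3, h4⟩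
      rcases mem_insert'.1 hz with rfl | hz
      · exact hlt
      · exact h1 z hz
    · refine ⟨h1, fun z hz => ?_, h3, ihr hx.2.2 h4⟩
      rcases mem_insert'.1 hz with rfl | hz
      · exact lt_of_le_of_ne (not_lt.1 hlt) (Ne.symm hx.1)
      · exact h2 z hz

theorem bs_foldl : ∀ (L : List ℝ) (t : BTree), BS t → L.Nodup → (∀ z ∈ L, ¬ Mem z t) →
    BS (L.foldl (fun t x => t.insert x) t)
  | [], t, ht, _, _ => ht
  | x :: L, t, ht, hnd, hm => by
    rw [List.foldl_cons]
    refine bs_foldl L _ (bs_insert (hm x (by simp)) ht) hnd.of_cons fun z hz hmem => ?_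
    rcases mem_insert'.1 hmem with rfl | h
    · exact (List.nodup_cons.1 hnd).1 hz
    · exact hm z (by simp [hz]) h

theorem bs_bstOfList {L : List ℝ} (hnd : L.Nodup) : BS (bstOfList L) :=
  bs_foldl L _ trivial hnd (fun _ _ h => h)

theorem anc_mem {a b : ℝ} : ∀ {t : BTree}, IsAncestor a b t → Mem a t ∧ Mem b t := by
  intro t
  induction t with
  | leaf => exact fun h => h.elim
  | node l y r ihl ihr =>
    rintro (⟨rfl, hb⟩ | h | h)
    · exact ⟨Or.inl rfl, Or.inr hb⟩
    · exact ⟨Or.inr (Or.inl (ihl h).1), Or.inr (Or.inl (ihl h).2)⟩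
    · exact ⟨Or.inr (Or.inr (ihr h).1), Or.inr (Or.inr (ihr h).2)⟩


theorem cancel_middle {α : Type*} {a : α} : ∀ (s s' : List α) {t t' : List α},
    s ++ a :: t = s' ++ a :: t' → a ∉ s → a ∉ s' → s = s' ∧ t = t'
  | [], [], t, t', h, _, _ => by simpa using h
  | [], c :: s', t, t', h, _, hs' => by
    simp only [List.nil_append, List.cons_append, List.cons.injEq] at h
    exact absurd (h.1 ▸ (List.mem_cons_self (a := c) (l := s'))) hs'
  | c :: s, [], t, t', h, hs, _ => by
    simp only [List.nil_append, List.cons_append, List.cons.injEq] at h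
    exact absurd (h.1.symm ▸ (List.mem_cons_self (a := c) (l := s))) hs
  | c :: s, c' :: s', t, t', h, hs, hs' => by
    simp only [List.cons_append, List.cons.injEq] at h
    obtain ⟨rfl, h⟩ := h
    obtain ⟨h1, h2⟩ := cancel_middle s s' h (fun hh => hs (List.mem_cons_of_mem _ hh))
      (fun hh => hs' (List.mem_cons_of_mem _ hh))
    exact ⟨by rw [h1], h2⟩


theorem mem_left_of_pair_sublist {α : Type*} {u a : α} : ∀ (L1 : List α) {L2 : List α},
    [u, a].Sublist (L1 ++ a :: L2) → (L1 ++ a :: L2).Nodup → u ∈ L1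
  | [], L2, h, hnd => by
    simp only [List.nil_append] at h hnd
    have ha : a ∉ L2 := (List.nodup_cons.1 hnd).1
    cases h with
    | cons _ h => exact absurd (h.subset (by simp)) ha
    | cons_cons _ h => exact absurd (h.subset (by simp)) ha
  | c :: L1, L2, h, hnd => by
    cases h with
    | cons _ h => exact List.mem_cons_of_mem _ (mem_left_of_pair_sublist L1 h hnd.of_cons)
    | cons_cons _ h => exact List.mem_cons_self

theorem foldl_insert_node : ∀ (L : List ℝ) (l r : BTree) (y : ℝ),
    L.foldl (fun t x => t.insert x) (BTree.node l y r)
      = BTree.node ((L.filter (fun z => decide (z < y))).foldl (fun t x => t.insert x) l) y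
          ((L.filter (fun z => !decide (z < y))).foldl (fun t x => t.insert x) r)
  | [], l, r, y => by simp
  | x :: L, l, r, y => by
    by_cases h : x < y <;>
      simp [List.filter_cons, h, BTree.insert, List.foldl_cons, foldl_insert_node L]

theorem bstOfList_cons (x : ℝ) (L : List ℝ) :
    bstOfList (x :: L) = BTree.node (bstOfList (L.filter (fun z => decide (z < x)))) x
      (bstOfList (L.filter (fun z => !decide (z < x)))) := by
  rw [bstOfList, List.foldl_cons]
  show (L.foldl (fun t x => t.insert x) (BTree.node .leaf x .leaf)) = _
  rw [foldl_insert_node L]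
  rfl

def AncL (a b : ℝ) (L : List ℝ) : Prop :=
  ∃ L1 L2, L = L1 ++ a :: L2 ∧ b ∈ L2 ∧ ∀ z ∈ L1, z < min a b ∨ max a b < z

theorem AncL.mem_left {a b : ℝ} {L : List ℝ} (h : AncL a b L) : a ∈ L := by
  obtain ⟨L1, L2, rfl, -, -⟩ := h; simp

theorem AncL.mem_right {a b : ℝ} {L : List ℝ} (h : AncL a b L) : b ∈ L := by
  obtain ⟨L1, L2, rfl, hb, -⟩ := h; simp [hb]

theorem ancL_filter {a b : ℝ} (p : ℝ → Bool) {L : List ℝ} (hnd : L.Nodup)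
    (hp : ∀ z, min a b ≤ z → z ≤ max a b → p z = true) :
    AncL a b (L.filter p) ↔ AncL a b L := by
  have hpa : p a = true := hp a (min_le_left _ _) (le_max_left _ _)
  have hpb : p b = true := hp b (min_le_right _ _) (le_max_right _ _)
  constructor
  · rintro ⟨M1, M2, hM, hb, hfree⟩
    have ha : a ∈ L := by
      have : a ∈ L.filter p := by rw [hM]; simp
      exact List.mem_of_mem_filter this
    obtain ⟨N1, N2, rfl⟩ := List.append_of_mem ha
    have haN1 : a ∉ N1 := by
      intro h; exact (List.nodup_append.1 hnd).2.2 a h a List.mem_cons_self rfl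
    have hfa : (N1 ++ a :: N2).filter p = N1.filter p ++ a :: N2.filter p := by
      simp [List.filter_append, List.filter_cons, hpa]
    rw [hfa] at hM
    have haN1' : a ∉ N1.filter p := fun h => haN1 (List.mem_of_mem_filter h)
    have haM1 : a ∉ M1 := by
      intro h
      have hnd2 := hnd.filter p
      rw [hfa, hM] at hnd2
      exact (List.nodup_append.1 hnd2).2.2 a h a List.mem_cons_self rfl
    obtain ⟨h1, h2⟩ := cancel_middle M1 (N1.filter p) hM.symm haM1 haN1'
    refine ⟨N1, N2, rfl, ?_, ?_⟩
    · rw [h2] at hb; exact List.mem_of_mem_filter hb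
    · intro z hz
      by_contra hcon
      push_neg at hcon
      have hzp : p z = true := hp z hcon.1 hcon.2
      have hzM : z ∈ M1 := h1 ▸ List.mem_filter.2 ⟨hz, hzp⟩
      rcases hfree z hzM with h | h
      · exact absurd h (not_lt.2 hcon.1)
      · exact absurd h (not_lt.2 hcon.2)
  · rintro ⟨N1, N2, rfl, hb, hfree⟩
    refine ⟨N1.filter p, N2.filter p, by simp [List.filter_append, List.filter_cons, hpa], ?_, ?_⟩
    · exact List.mem_filter.2 ⟨hb, hpb⟩
    · exact fun z hz => hfree z (List.mem_of_mem_filter hz)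
theorem anc_iff : ∀ (L : List ℝ), L.Nodup → ∀ a b : ℝ,
    (BTree.IsAncestor a b (bstOfList L) ↔ AncL a b L)
  | [], _, a, b => by
    constructor
    · intro h; exact absurd h (by simp [bstOfList, BTree.IsAncestor])
    · rintro ⟨L1, L2, hL, -, -⟩; exact absurd hL.symm (by simp)
  | x :: L, hnd, a, b => by
    have hndL : L.Nodup := hnd.of_cons
    have hxL : x ∉ L := (List.nodup_cons.1 hnd).1
    rw [bstOfList_cons]
    have hmem : ∀ z : ℝ, (Mem z (bstOfList (L.filter (fun z => decide (z < x)))) ∨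
        Mem z (bstOfList (L.filter (fun z => !decide (z < x))))) ↔ z ∈ L := by
      intro z
      rw [mem_bstOfList, mem_bstOfList, List.mem_filter, List.mem_filter]
      by_cases h : z < x <;> simp [h]
    have hlift : ∀ N1 N2, L = N1 ++ a :: N2 → b ∈ N2 →
        (∀ z ∈ N1, z < min a b ∨ max a b < z) → (x < min a b ∨ max a b < x) →
        AncL a b (x :: L) := by
      intro N1 N2 hL hbN hfree hx
      refine ⟨x :: N1, N2, by rw [hL]; rfl, hbN, ?_⟩
      intro z hz
      rcases List.mem_cons.1 hz with rfl | hz'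
      · exact hx
      · exact hfree z hz'
    constructor
    · rintro (⟨rfl, hb⟩ | h | h)
      · exact ⟨[], L, rfl, (hmem b).1 hb, by simp⟩
      · have h' := (anc_iff (L.filter (fun z => decide (z < x))) (hndL.filter _) a b).1 h
        have ha : a < x := by simpa using (List.mem_filter.1 h'.mem_left).2
        have hb : b < x := by simpa using (List.mem_filter.1 h'.mem_right).2
        have h'' := (ancL_filter (a := a) (b := b) _ hndL (fun z _ hz2 =>
          decide_eq_true (lt_of_le_of_lt hz2 (max_lt ha hb)))).1 h'
        obtain ⟨N1, N2, hL, hbN, hfree⟩ := h''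
        exact hlift N1 N2 hL hbN hfree (Or.inr (max_lt ha hb))
      · have h' := (anc_iff (L.filter (fun z => !decide (z < x))) (hndL.filter _) a b).1 h
        have haL : a ∈ L := List.mem_of_mem_filter h'.mem_left
        have hbL : b ∈ L := List.mem_of_mem_filter h'.mem_right
        have ha : x < a := by
          have := (List.mem_filter.1 h'.mem_left).2
          simp only [Bool.not_eq_true', decide_eq_false_iff_not, not_lt] at this
          exact lt_of_le_of_ne this (fun hh => hxL (hh ▸ haL))
        have hb : x < b := by
          have := (List.mem_filter.1 h'.mem_right).2
          simp only [Bool.not_eq_true', decide_eq_false_iff_not, not_lt] at this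
          exact lt_of_le_of_ne this (fun hh => hxL (hh ▸ hbL))
        have h'' := (ancL_filter (a := a) (b := b) _ hndL (fun z hz1 _ => by
          simp only [Bool.not_eq_true', decide_eq_false_iff_not, not_lt]
          exact le_of_lt (lt_of_lt_of_le (lt_min ha hb) hz1))).1 h'
        obtain ⟨N1, N2, hL, hbN, hfree⟩ := h''
        exact hlift N1 N2 hL hbN hfree (Or.inl (lt_min ha hb))
    · rintro ⟨L1, L2, hL, hb, hfree⟩
      match L1, hL with
      | [], hL =>
        obtain ⟨rfl, rfl⟩ : x = a ∧ L = L2 := by simpa using hL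
        exact Or.inl ⟨rfl, (hmem b).2 hb⟩
      | c :: L1, hL =>
        obtain ⟨rfl, hL'⟩ : x = c ∧ L = L1 ++ a :: L2 := by simpa using hL
        have haL : a ∈ L := by rw [hL']; simp
        have hbL : b ∈ L := by rw [hL']; simp [hb]
        have hAnc : AncL a b L := ⟨L1, L2, hL', hb, fun z hz => hfree z (by simp [hz])⟩
        rcases hfree x (by simp) with hx | hx
        · -- x < min a b : right subtree
          have ha : x < a := lt_of_lt_of_le hx (min_le_left _ _)
          have hbx : x < b := lt_of_lt_of_le hx (min_le_right _ _)
          refine Or.inr (Or.inr ?_)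
          refine (anc_iff (L.filter (fun z => !decide (z < x))) (hndL.filter _) a b).2 ?_
          refine (ancL_filter (a := a) (b := b) _ hndL (fun z hz1 _ => by
            simp only [Bool.not_eq_true', decide_eq_false_iff_not, not_lt]
            exact le_of_lt (lt_of_lt_of_le hx hz1))).2 hAnc
        · -- max a b < x : left subtree
          have ha : a < x := lt_of_le_of_lt (le_max_left _ _) hx
          have hbx : b < x := lt_of_le_of_lt (le_max_right _ _) hx
          refine Or.inr (Or.inl ?_)
          refine (anc_iff (L.filter (fun z => decide (z < x))) (hndL.filter _) a b).2 ?_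
          refine (ancL_filter (a := a) (b := b) _ hndL (fun z _ hz2 =>
            decide_eq_true (lt_of_le_of_lt hz2 hx))).2 hAnc
  termination_by L => L.length
  decreasing_by all_goals (simp only [List.length_cons]; exact Nat.lt_succ_of_le (List.length_filter_le _ _))

theorem ancL_sublist {L L' : List ℝ} (h : L'.Sublist L) (hnd : L.Nodup) {a b : ℝ}
    (ha : a ∈ L') (hb : b ∈ L') (hanc : AncL a b L) : AncL a b L' := by
  have hnd' : L'.Nodup := hnd.sublist h
  obtain ⟨L1, L2, hL, hbL2, hfree⟩ := hanc
  obtain ⟨M1, M2, rfl⟩ := List.append_of_mem ha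
  have hmemL1 : ∀ z ∈ M1, z ∈ L1 := by
    intro z hz
    have hsub : [z, a].Sublist (M1 ++ a :: M2) :=
      (List.singleton_sublist.2 hz).append (List.singleton_sublist.2 List.mem_cons_self)
    exact mem_left_of_pair_sublist L1 (hL ▸ (hsub.trans h)) (hL ▸ hnd)
  have hba : b ≠ a := by
    intro hh
    have : a ∉ L2 := (List.nodup_cons.1 (List.nodup_append.1 (hL ▸ hnd)).2.1).1
    exact this (hh ▸ hbL2)
  have hbM2 : b ∈ M2 := by
    rcases List.mem_append.1 hb with hbM1 | hbc
    · rcases hfree b (hmemL1 b hbM1) with hcl | hcl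
      · exact absurd hcl (not_lt.2 (min_le_right _ _))
      · exact absurd hcl (not_lt.2 (le_max_right _ _))
    · rcases List.mem_cons.1 hbc with hh | hh
      · exact absurd hh hba
      · exact hh
  exact ⟨M1, M2, rfl, hbM2, fun z hz => hfree z (hmemL1 z hz)⟩

noncomputable def pathL : BTree → List ℝ
  | .leaf => []
  | .node l y r => y :: (if BTree.depth r ≤ BTree.depth l then pathL l else pathL r)

theorem pathL_length : ∀ t : BTree, (pathL t).length = BTree.depth t
  | .leaf => rfl
  | .node l y r => by
    rw [pathL]
    by_cases h : BTree.depth r ≤ BTree.depth l <;>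
      simp [h, pathL_length l, pathL_length r, BTree.depth]
    · omega
    · omega

theorem pathL_mem : ∀ t : BTree, ∀ z ∈ pathL t, Mem z t
  | .leaf => by simp [pathL]
  | .node l y r => by
    intro z hz
    rw [pathL] at hz
    rcases List.mem_cons.1 hz with rfl | hz'
    · exact Or.inl rfl
    · split_ifs at hz' with h
      · exact Or.inr (Or.inl (pathL_mem l z hz'))
      · exact Or.inr (Or.inr (pathL_mem r z hz'))

theorem pathL_nodup : ∀ t : BTree, BS t → (pathL t).Nodup
  | .leaf, _ => List.nodup_nil
  | .node l y r, h => by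
    obtain ⟨h1, h2, h3, h4⟩ := h
    rw [pathL]
    refine List.nodup_cons.2 ⟨?_, ?_⟩
    · intro hy
      split_ifs at hy with hd
      · exact lt_irrefl y (h1 y (pathL_mem l y hy))
      · exact lt_irrefl y (h2 y (pathL_mem r y hy))
    · split_ifs with hd
      · exact pathL_nodup l h3
      · exact pathL_nodup r h4

theorem pathL_chain : ∀ t : BTree, BTree.IsChain t {z | z ∈ pathL t}
  | .leaf => by intro a ha; simp [pathL] at ha
  | .node l y r => by
    intro p hp q hq
    simp only [Set.mem_setOf_eq, pathL] at hp hq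
    rcases List.mem_cons.1 hp with rfl | hp' <;> rcases List.mem_cons.1 hq with h | hq'
    · exact Or.inl h.symm
    · refine Or.inr (Or.inl (Or.inl ⟨rfl, ?_⟩))
      split_ifs at hq' with hd
      · exact Or.inl (pathL_mem l q hq')
      · exact Or.inr (pathL_mem r q hq')
    · subst h
      refine Or.inr (Or.inr (Or.inl ⟨rfl, ?_⟩))
      split_ifs at hp' with hd
      · exact Or.inl (pathL_mem l p hp')
      · exact Or.inr (pathL_mem r p hp')
    · split_ifs at hp' hq' with hd
      · rcases pathL_chain l p hp' q hq' with h | h | h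
        · exact Or.inl h
        · exact Or.inr (Or.inl (Or.inr (Or.inl h)))
        · exact Or.inr (Or.inr (Or.inr (Or.inl h)))
      · rcases pathL_chain r p hp' q hq' with h | h | h
        · exact Or.inl h
        · exact Or.inr (Or.inl (Or.inr (Or.inr h)))
        · exact Or.inr (Or.inr (Or.inr (Or.inr h)))

theorem chain_card_le_depth (t : BTree) (hbs : BS t) (S : Finset ℝ)
    (hmem : ∀ a ∈ S, Mem a t) (hch : BTree.IsChain t ↑S) : S.card ≤ BTree.depth t := by
  induction t generalizing S with
  | leaf =>
    have : S = ∅ := Finset.eq_empty_of_forall_notMem fun a ha => hmem a ha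
    simp [this]
  | node l y r ihl ihr =>
    obtain ⟨h1, h2, h3, h4⟩ := hbs
    set Sl := S.filter (fun z => Mem z l) with hSl
    set Sr := S.filter (fun z => Mem z r) with hSr
    have hcover : ∀ a ∈ S, a = y ∨ a ∈ Sl ∨ a ∈ Sr := by
      intro a ha
      rcases hmem a ha with h | h | h
      · exact Or.inl h
      · exact Or.inr (Or.inl (Finset.mem_filter.2 ⟨ha, h⟩))
      · exact Or.inr (Or.inr (Finset.mem_filter.2 ⟨ha, h⟩))
    have hdisj : Sl = ∅ ∨ Sr = ∅ := by
      by_contra hcon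
      push_neg at hcon
      obtain ⟨a, haS⟩ := hcon.1
      obtain ⟨c, hcS⟩ := hcon.2
      have hal : Mem a l := (Finset.mem_filter.1 haS).2
      have hcr : Mem c r := (Finset.mem_filter.1 hcS).2
      have hay : a < y := h1 a hal
      have hcy : y < c := h2 c hcr
      rcases hch a (by exact (Finset.mem_filter.1 haS).1) c (by exact (Finset.mem_filter.1 hcS).1)
        with rfl | h | h
      · exact lt_irrefl a (hay.trans hcy)
      · rcases h with ⟨hh, -⟩ | hh | hh
        · exact absurd (hh ▸ hay) (lt_irrefl y)
        · exact absurd (h1 c (anc_mem hh).2) (not_lt.2 (le_of_lt hcy))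
        · exact absurd (h2 a (anc_mem hh).1) (not_lt.2 (le_of_lt hay))
      · rcases h with ⟨hh, -⟩ | hh | hh
        · exact absurd (hh ▸ hcy) (lt_irrefl y)
        · exact absurd (h1 c (anc_mem hh).1) (not_lt.2 (le_of_lt hcy))
        · exact absurd (h2 a (anc_mem hh).2) (not_lt.2 (le_of_lt hay))
    have hchl : BTree.IsChain l ↑Sl := by
      intro p hp q hq
      simp only [hSl, hSr, Finset.coe_filter, Set.mem_setOf_eq] at hp hq
      rcases hch p hp.1 q hq.1 with h | h | h
      · exact Or.inl h
      · rcases h with ⟨hh, -⟩ | hh | hh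
        · exact absurd (hh ▸ h1 p hp.2) (lt_irrefl y)
        · exact Or.inr (Or.inl hh)
        · exact absurd (h2 p (anc_mem hh).1) (not_lt.2 (le_of_lt (h1 p hp.2)))
      · rcases h with ⟨hh, -⟩ | hh | hh
        · exact absurd (hh ▸ h1 q hq.2) (lt_irrefl y)
        · exact Or.inr (Or.inr hh)
        · exact absurd (h2 q (anc_mem hh).1) (not_lt.2 (le_of_lt (h1 q hq.2)))
    have hchr : BTree.IsChain r ↑Sr := by
      intro p hp q hq
      simp only [hSl, hSr, Finset.coe_filter, Set.mem_setOf_eq] at hp hq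
      rcases hch p hp.1 q hq.1 with h | h | h
      · exact Or.inl h
      · rcases h with ⟨hh, -⟩ | hh | hh
        · exact absurd (hh ▸ h2 p hp.2) (lt_irrefl y)
        · exact absurd (h1 p (anc_mem hh).1) (not_lt.2 (le_of_lt (h2 p hp.2)))
        · exact Or.inr (Or.inl hh)
      · rcases h with ⟨hh, -⟩ | hh | hh
        · exact absurd (hh ▸ h2 q hq.2) (lt_irrefl y)
        · exact absurd (h1 q (anc_mem hh).1) (not_lt.2 (le_of_lt (h2 q hq.2)))
        · exact Or.inr (Or.inr hh)
    have hl' : Sl.card ≤ BTree.depth l := ihl h3 Sl (fun a ha => (Finset.mem_filter.1 ha).2) hchl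
    have hr' : Sr.card ≤ BTree.depth r := ihr h4 Sr (fun a ha => (Finset.mem_filter.1 ha).2) hchr
    rcases hdisj with hd | hd
    · have : S ⊆ insert y Sr := by
        intro a ha
        rcases hcover a ha with h | h | h
        · simp [h]
        · rw [hd] at h; exact absurd h (Finset.notMem_empty a)
        · exact Finset.mem_insert_of_mem h
      calc S.card ≤ (insert y Sr).card := Finset.card_le_card this
        _ ≤ 1 + Sr.card := by rw [add_comm]; exact Finset.card_insert_le _ _
        _ ≤ 1 + max (BTree.depth l) (BTree.depth r) := by
            have := le_max_right (BTree.depth l) (BTree.depth r); omega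
        _ = BTree.depth (BTree.node l y r) := rfl
    · have : S ⊆ insert y Sl := by
        intro a ha
        rcases hcover a ha with h | h | h
        · simp [h]
        · exact Finset.mem_insert_of_mem h
        · rw [hd] at h; exact absurd h (Finset.notMem_empty a)
      calc S.card ≤ (insert y Sl).card := Finset.card_le_card this
        _ ≤ 1 + Sl.card := by rw [add_comm]; exact Finset.card_insert_le _ _
        _ ≤ 1 + max (BTree.depth l) (BTree.depth r) := by
            have := le_max_left (BTree.depth l) (BTree.depth r); omega
        _ = BTree.depth (BTree.node l y r) := rfl

theorem length_filter_comp (l : List (ℝ × ℝ)) (q : ℝ → Bool) :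
    (l.filter (fun p => q p.2)).length = ((l.map Prod.snd).filter q).length := by
  induction l with
  | nil => rfl
  | cons p l ih =>
    by_cases h : q p.2 <;> simp [List.filter_cons, h, ih]

theorem filter_mem_length {L P : List ℝ} (hndL : L.Nodup) (hndP : P.Nodup)
    (hPL : ∀ z ∈ P, z ∈ L) : (L.filter (fun z => decide (z ∈ P))).length = P.length := by
  rw [← List.toFinset_card_of_nodup (hndL.filter _), ← List.toFinset_card_of_nodup hndP]
  congr 1
  ext z
  simp only [List.mem_toFinset, List.mem_filter, decide_eq_true_eq]
  exact ⟨fun h => h.2, fun h => ⟨hPL z h, h⟩⟩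

theorem stmt6' (Pp Pm : List (ℝ × ℝ)) (hsub : Pm.Sublist Pp)
    (hxs : Pp.Pairwise (fun p q => p.1 < q.1))
    (hyd : Pp.Pairwise (fun p q => p.2 ≠ q.2))
    (C : Finset (ℝ × ℝ)) (hCsub : ∀ p ∈ C, p ∈ Pp)
    (hCchain : BTree.IsChain (bstOfList (Pp.map Prod.snd)) (Prod.snd '' (C : Set (ℝ × ℝ))))
    (hCmax : ∀ C' : Finset (ℝ × ℝ), (∀ p ∈ C', p ∈ Pp) →
      BTree.IsChain (bstOfList (Pp.map Prod.snd)) (Prod.snd '' (C' : Set (ℝ × ℝ))) →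
      C'.card ≤ C.card) :
    (bstOfList (Pp.map Prod.snd)).height - ((C.filter (fun p => p ∉ Pm)).card : ℤ)
        ≤ (bstOfList (Pm.map Prod.snd)).height
    ∧ (Pp.length = Pm.length + 1 →
        (bstOfList (Pp.map Prod.snd)).height - 1 ≤ (bstOfList (Pm.map Prod.snd)).height) := by
  classical
  set L : List ℝ := Pp.map Prod.snd with hLdef
  set L' : List ℝ := Pm.map Prod.snd with hL'def
  have hndL : L.Nodup := by
    rw [hLdef, List.Nodup]
    exact List.pairwise_map.2 hyd
  have hsubL : L'.Sublist L := hsub.map _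
  have hndL' : L'.Nodup := hndL.sublist hsubL
  have hndPp : Pp.Nodup := by
    rw [List.Nodup]
    exact hxs.imp fun h e => absurd (e ▸ h) (lt_irrefl _)
  have hndPm : Pm.Nodup := hndPp.sublist hsub
  have hinj : ∀ p ∈ Pp, ∀ q ∈ Pp, p.2 = q.2 → p = q := by
    intro p hp q hq he
    by_contra hne
    haveI : Std.Symm (fun p q : ℝ × ℝ => p.2 ≠ q.2) := ⟨fun _ _ h => h.symm⟩
    exact List.Pairwise.forall hyd hp hq hne he
  set T := bstOfList L with hT
  set T' := bstOfList L' with hT'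
  have hBS : BS T := bs_bstOfList hndL
  have hBS' : BS T' := bs_bstOfList hndL'
  -- Step 1 : depth T ≤ C.card
  set P : List ℝ := pathL T with hP
  have hPsubL : ∀ z ∈ P, z ∈ L := fun z hz => mem_bstOfList.1 (pathL_mem T z hz)
  set C' : Finset (ℝ × ℝ) := (Pp.filter (fun p => decide (p.2 ∈ P))).toFinset with hC'
  have hC'sub : ∀ p ∈ C', p ∈ Pp := by
    intro p hp
    rw [hC', List.mem_toFinset] at hp
    exact List.mem_of_mem_filter hp
  have himg : Prod.snd '' (C' : Set (ℝ × ℝ)) = {z | z ∈ P} := by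
    ext z
    constructor
    · rintro ⟨p, hp, rfl⟩
      simp only [hC', Finset.mem_coe, List.mem_toFinset, List.mem_filter,
        decide_eq_true_eq] at hp
      exact hp.2
    · intro hz
      obtain ⟨p, hpPp, hpz⟩ := List.mem_map.1 (hPsubL z hz)
      exact ⟨p, by simp only [hC', Finset.mem_coe, List.mem_toFinset, List.mem_filter,
        decide_eq_true_eq]; exact ⟨hpPp, hpz ▸ hz⟩, hpz⟩
  have hC'card : C'.card = BTree.depth T := by
    rw [hC', List.toFinset_card_of_nodup (hndPp.filter _), length_filter_comp Pp (fun z => decide (z ∈ P)),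
      filter_mem_length hndL (pathL_nodup T hBS) hPsubL, pathL_length]
  have step1 : BTree.depth T ≤ C.card := by
    rw [← hC'card]
    exact hCmax C' hC'sub (by rw [himg]; exact pathL_chain T)
  -- Step 2 : (C.filter (· ∈ Pm)).card ≤ depth T'
  set D : Finset (ℝ × ℝ) := C.filter (fun p => p ∈ Pm) with hD
  set S : Finset ℝ := D.image Prod.snd with hS
  have hDP : ∀ p ∈ D, p ∈ Pm := by
    intro p hp; rw [hD, Finset.mem_filter] at hp; exact hp.2
  have hDC : ∀ p ∈ D, p ∈ C := by
    intro p hp; rw [hD, Finset.mem_filter] at hp; exact hp.1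
  have hScard : S.card = D.card :=
    Finset.card_image_of_injOn fun p hp q hq he =>
      hinj p (hCsub p (hDC p hp)) q (hCsub q (hDC q hq)) he
  have hSmem : ∀ z ∈ S, Mem z T' := by
    intro z hz
    obtain ⟨p, hp, rfl⟩ := Finset.mem_image.1 hz
    exact mem_bstOfList.2 (List.mem_map.2 ⟨p, hDP p hp, rfl⟩)
  have hSchain : BTree.IsChain T' ↑S := by
    intro a ha b hb
    rw [hS, Finset.coe_image] at ha hb
    obtain ⟨pa, hpa, rfl⟩ := ha
    obtain ⟨pb, hpb, rfl⟩ := hb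
    have ha' : pa.2 ∈ Prod.snd '' (C : Set (ℝ × ℝ)) := ⟨pa, hDC pa hpa, rfl⟩
    have hb' : pb.2 ∈ Prod.snd '' (C : Set (ℝ × ℝ)) := ⟨pb, hDC pb hpb, rfl⟩
    have haL' : pa.2 ∈ L' := List.mem_map.2 ⟨pa, hDP pa hpa, rfl⟩
    have hbL' : pb.2 ∈ L' := List.mem_map.2 ⟨pb, hDP pb hpb, rfl⟩
    rcases hCchain _ ha' _ hb' with h | h | h
    · exact Or.inl h
    · exact Or.inr (Or.inl ((anc_iff L' hndL' _ _).2
        (ancL_sublist hsubL hndL haL' hbL' ((anc_iff L hndL _ _).1 h))))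
    · exact Or.inr (Or.inr ((anc_iff L' hndL' _ _).2
        (ancL_sublist hsubL hndL hbL' haL' ((anc_iff L hndL _ _).1 h))))
  have step2 : D.card ≤ BTree.depth T' := by
    rw [← hScard]
    exact chain_card_le_depth T' hBS' S hSmem hSchain
  -- counting
  have hsplit : D.card + (C.filter (fun p => p ∉ Pm)).card = C.card := by
    rw [hD]
    exact Finset.card_filter_add_card_filter_not _
  have main : T.height - ((C.filter (fun p => p ∉ Pm)).card : ℤ) ≤ T'.height := by
    rw [BTree.height, BTree.height]
    omega
  refine ⟨main, fun hlen => ?_⟩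
  have hK : (C.filter (fun p => p ∉ Pm)).card ≤ 1 := by
    have hsubK : C.filter (fun p => p ∉ Pm) ⊆ Pp.toFinset \ Pm.toFinset := by
      intro p hp
      rw [Finset.mem_filter] at hp
      rw [Finset.mem_sdiff, List.mem_toFinset, List.mem_toFinset]
      exact ⟨hCsub p hp.1, hp.2⟩
    have hsubF : Pm.toFinset ⊆ Pp.toFinset := by
      intro p hp
      rw [List.mem_toFinset] at hp ⊢
      exact hsub.subset hp
    have : (Pp.toFinset \ Pm.toFinset).card = 1 := by
      rw [Finset.card_sdiff_of_subset hsubF, List.toFinset_card_of_nodup hndPp,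
        List.toFinset_card_of_nodup hndPm, hlen]
      omega
    calc (C.filter (fun p => p ∉ Pm)).card ≤ _ := Finset.card_le_card hsubK
      _ = 1 := this
  have := main
  omega

end Aux


open scoped Classical in
/-- **Height comparison for binary search trees of nested point sets.** If `P₋ ⊆ P₊` are
point sets with distinct coordinates (lists sorted by increasing `x`) and `𝒞` is a chain
of maximal size in `BST(P₊)`, then
`h(BST(P₋)) ≥ h(BST(P₊)) - |𝒞 ∩ (P₊ \ P₋)|`. In particular, removing a single point
decreases the BST height by at most `1`. -/
theorem stmt6 (Pp Pm : List (ℝ × ℝ)) (hsub : Pm.Sublist Pp)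
    (hxs : Pp.Pairwise (fun p q => p.1 < q.1))
    (hyd : Pp.Pairwise (fun p q => p.2 ≠ q.2))
    (C : Finset (ℝ × ℝ)) (hCsub : ∀ p ∈ C, p ∈ Pp)
    (hCchain : BTree.IsChain (bstOfSortedPts Pp) (Prod.snd '' (C : Set (ℝ × ℝ))))
    (hCmax : ∀ C' : Finset (ℝ × ℝ), (∀ p ∈ C', p ∈ Pp) →
      BTree.IsChain (bstOfSortedPts Pp) (Prod.snd '' (C' : Set (ℝ × ℝ))) →
      C'.card ≤ C.card) :
    (bstOfSortedPts Pp).height - ((C.filter (fun p => p ∉ Pm)).card : ℤ)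
        ≤ (bstOfSortedPts Pm).height
    ∧ (Pp.length = Pm.length + 1 →
        (bstOfSortedPts Pp).height - 1 ≤ (bstOfSortedPts Pm).height) := by
  exact stmt6' Pp Pm hsub hxs hyd C hCsub hCchain hCmax
end

section
/- Let $y_1, \dots, y_n$ be distinct real numbers, $\mathcal{T} = \mathrm{BST}(y_1,\dots,y_n)$, and let $u$ be a node of $\mathcal{T}$ with $\mathcal{T}(u) = y_k$. Then the number of descendants of $u$ in $\mathcal{T}$ (including $u$) equals $|\{y_k, y_{k+1}, \dots, y_n\} \cap (L(u), R(u))|$, where $L(u)$ is the label of the deepest ancestor of $u$ whose label is less than $\mathcal{T}(u)$ (or $-\infty$ if none exists) and $R(u)$ is the label of the deepest ancestor of $u$ whose label is greater than $\mathcal{T}(u)$ (or $+\infty$ if none exists). -/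
namespace BTree

def IsBST : BTree → Prop
  | leaf => True
  | node l y r => (∀ b, Mem b l → b < y) ∧ (∀ b, Mem b r → y < b) ∧ IsBST l ∧ IsBST r

def onPath (x : ℝ) : BTree → Set ℝ
  | leaf => ∅
  | node l y r => {y} ∪ (if x < y then onPath x l else onPath x r)

lemma mem_insert_iff {b x : ℝ} : ∀ {t : BTree}, Mem b (t.insert x) ↔ b = x ∨ Mem b t
  | leaf => by simp [BTree.insert, Mem]
  | node l y r => by
      by_cases h : x < y <;>
        simp only [BTree.insert, h, if_true, if_false, Mem,
          mem_insert_iff (t := l), mem_insert_iff (t := r)] <;> tauto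

lemma mem_of_isAncestor {a b : ℝ} : ∀ {t : BTree}, IsAncestor a b t → Mem b t
  | leaf, h => h
  | node l y r, h => by
      rcases h with ⟨_, h⟩ | h | h
      · exact h.elim (fun h => Or.inr (Or.inl h)) (fun h => Or.inr (Or.inr h))
      · exact Or.inr (Or.inl (mem_of_isAncestor h))
      · exact Or.inr (Or.inr (mem_of_isAncestor h))

lemma mem_of_isAncestor_left {a b : ℝ} : ∀ {t : BTree}, IsAncestor a b t → Mem a t
  | leaf, h => h
  | node l y r, h => by
      rcases h with ⟨h, _⟩ | h | h
      · exact Or.inl h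
      · exact Or.inr (Or.inl (mem_of_isAncestor_left h))
      · exact Or.inr (Or.inr (mem_of_isAncestor_left h))

lemma mem_of_onPath {a x : ℝ} : ∀ {t : BTree}, a ∈ onPath x t → Mem a t
  | leaf, h => h
  | node l y r, h => by
      rcases h with h | h
      · exact Or.inl h
      · split at h
        · exact Or.inr (Or.inl (mem_of_onPath h))
        · exact Or.inr (Or.inr (mem_of_onPath h))

lemma isAncestor_insert {a b x : ℝ} : ∀ {t : BTree},
    IsAncestor a b (t.insert x) ↔ IsAncestor a b t ∨ (b = x ∧ a ∈ onPath x t)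
  | leaf => by simp [BTree.insert, IsAncestor, Mem, onPath]
  | node l y r => by
      by_cases h : x < y <;>
        simp only [BTree.insert, h, if_true, if_false, IsAncestor, onPath,
          mem_insert_iff, isAncestor_insert (t := l), isAncestor_insert (t := r),
          Set.mem_union, Set.mem_singleton_iff] <;> tauto

lemma isBST_insert {x : ℝ} : ∀ {t : BTree}, IsBST t → ¬ Mem x t → IsBST (t.insert x)
  | leaf, _, _ => by simp [BTree.insert, IsBST, Mem]
  | node l y r, ⟨hl, hr, bl, br⟩, hx => by
      have hxy : x ≠ y := fun h => hx (Or.inl h)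
      have hxl : ¬ Mem x l := fun h => hx (Or.inr (Or.inl h))
      have hxr : ¬ Mem x r := fun h => hx (Or.inr (Or.inr h))
      by_cases h : x < y
      · simp only [BTree.insert, h, if_true, IsBST]
        refine ⟨fun b hb => ?_, hr, isBST_insert bl hxl, br⟩
        rcases mem_insert_iff.mp hb with rfl | hb
        · exact h
        · exact hl b hb
      · simp only [BTree.insert, h, if_false, IsBST]
        have h' : y < x := lt_of_le_of_ne (not_lt.mp h) (Ne.symm hxy)
        refine ⟨hl, fun b hb => ?_, bl, isBST_insert br hxr⟩
        rcases mem_insert_iff.mp hb with rfl | hb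
        · exact h'
        · exact hr b hb


lemma onPath_iff {x a : ℝ} : ∀ {t : BTree}, IsBST t → ¬ Mem x t → Mem a t →
    (a ∈ onPath x t ↔ ∀ c, IsAncestor c a t → (c < a ∧ c < x) ∨ (a < c ∧ x < c))
  | leaf, _, _, ha => absurd ha id
  | node l y r, ⟨hl, hr, bl, br⟩, hx, ha => by
      have hxy : x ≠ y := fun h => hx (Or.inl h)
      have hxl : ¬ Mem x l := fun h => hx (Or.inr (Or.inl h))
      have hxr : ¬ Mem x r := fun h => hx (Or.inr (Or.inr h))
      rcases ha with rfl | ha | ha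
      · -- a is the root label
        have hal : ¬ Mem a l := fun h => lt_irrefl a (hl a h)
        have har : ¬ Mem a r := fun h => lt_irrefl a (hr a h)
        constructor
        · intro _ c hc
          rcases hc with ⟨_, h⟩ | h | h
          · exact absurd h (by tauto)
          · exact absurd (mem_of_isAncestor h) hal
          · exact absurd (mem_of_isAncestor h) har
        · intro _
          exact Or.inl rfl
      · -- a in the left subtree
        have hay : a < y := hl a ha
        have har : ¬ Mem a r := fun h => absurd (hr a h) (by linarith)
        have key : (∀ c, IsAncestor c a (node l y r) → (c < a ∧ c < x) ∨ (a < c ∧ x < c))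
            ↔ (x < y ∧ ∀ c, IsAncestor c a l → (c < a ∧ c < x) ∨ (a < c ∧ x < c)) := by
          constructor
          · intro h
            refine ⟨?_, fun c hc => h c (Or.inr (Or.inl hc))⟩
            rcases h y (Or.inl ⟨rfl, Or.inl ha⟩) with ⟨h1, _⟩ | ⟨_, h2⟩
            · linarith
            · exact h2
          · rintro ⟨hxy', h⟩ c hc
            rcases hc with ⟨rfl, _⟩ | hc | hc
            · exact Or.inr ⟨hay, hxy'⟩
            · exact h c hc
            · exact absurd (mem_of_isAncestor hc) har
        rw [key, ← onPath_iff bl hxl ha]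
        by_cases h : x < y
        · simp only [onPath, if_pos h, Set.mem_union, Set.mem_singleton_iff]
          constructor
          · rintro (rfl | h')
            · linarith
            · exact ⟨h, h'⟩
          · rintro ⟨_, h'⟩; exact Or.inr h'
        · simp only [onPath, if_neg h, Set.mem_union, Set.mem_singleton_iff]
          constructor
          · rintro (rfl | h')
            · linarith
            · exact absurd (mem_of_onPath h') har
          · rintro ⟨h', _⟩; exact absurd h' h
      · -- a in the right subtree
        have hay : y < a := hr a ha
        have hal : ¬ Mem a l := fun h => absurd (hl a h) (by linarith)
        have key : (∀ c, IsAncestor c a (node l y r) → (c < a ∧ c < x) ∨ (a < c ∧ x < c))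
            ↔ (y < x ∧ ∀ c, IsAncestor c a r → (c < a ∧ c < x) ∨ (a < c ∧ x < c)) := by
          constructor
          · intro h
            refine ⟨?_, fun c hc => h c (Or.inr (Or.inr hc))⟩
            rcases h y (Or.inl ⟨rfl, Or.inr ha⟩) with ⟨_, h1⟩ | ⟨h2, _⟩
            · exact h1
            · linarith
          · rintro ⟨hxy', h⟩ c hc
            rcases hc with ⟨rfl, _⟩ | hc | hc
            · exact Or.inl ⟨hay, hxy'⟩
            · exact absurd (mem_of_isAncestor hc) hal
            · exact h c hc
        rw [key, ← onPath_iff br hxr ha]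
        by_cases h : x < y
        · simp only [onPath, if_pos h, Set.mem_union, Set.mem_singleton_iff]
          constructor
          · rintro (rfl | h')
            · linarith
            · exact absurd (mem_of_onPath h') hal
          · rintro ⟨h', _⟩; linarith
        · simp only [onPath, if_neg h, Set.mem_union, Set.mem_singleton_iff]
          have h' : y < x := lt_of_le_of_ne (not_lt.mp h) (Ne.symm hxy)
          constructor
          · rintro (rfl | hp)
            · linarith
            · exact ⟨h', hp⟩
          · rintro ⟨_, hp⟩; exact Or.inr hp

lemma setOf_mem_finite : ∀ (t : BTree), {b : ℝ | Mem b t}.Finite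
  | leaf => by simp [Mem]
  | node l y r => by
      have : {b : ℝ | Mem b (node l y r)} ⊆ {y} ∪ ({b | Mem b l} ∪ {b | Mem b r}) := by
        rintro b (h | h | h)
        · exact Or.inl h
        · exact Or.inr (Or.inl h)
        · exact Or.inr (Or.inr h)
      exact Set.Finite.subset (((setOf_mem_finite l).union (setOf_mem_finite r)).insert y)
        (by simpa using this)


lemma not_isAncestor_of_not_mem {a b : ℝ} {t : BTree} (h : ¬ Mem b t) :
    ¬ IsAncestor a b t := fun ha => h (mem_of_isAncestor ha)

lemma mem_foldl {b : ℝ} : ∀ (l : List ℝ) (t : BTree),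
    Mem b (l.foldl (fun t x => t.insert x) t) ↔ b ∈ l ∨ Mem b t
  | [], t => by simp
  | x :: l, t => by
      simp only [List.foldl_cons, mem_foldl l, mem_insert_iff, List.mem_cons]
      tauto

lemma isAncestor_foldl_of_mem {a b : ℝ} : ∀ (l : List ℝ) (t : BTree), Mem b t → b ∉ l →
    (IsAncestor a b (l.foldl (fun t x => t.insert x) t) ↔ IsAncestor a b t)
  | [], t, _, _ => Iff.rfl
  | x :: l, t, hb, hbl => by
      simp only [List.foldl_cons]
      rw [isAncestor_foldl_of_mem l _ (mem_insert_iff.mpr (Or.inr hb))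
        (fun h => hbl (List.mem_cons_of_mem _ h)), isAncestor_insert]
      have : b ≠ x := fun h => hbl (h ▸ List.mem_cons_self)
      tauto

lemma isBST_foldl : ∀ (l : List ℝ) (t : BTree), IsBST t → l.Nodup →
    (∀ x ∈ l, ¬ Mem x t) → IsBST (l.foldl (fun t x => t.insert x) t)
  | [], t, ht, _, _ => ht
  | x :: l, t, ht, hnd, hdisj => by
      simp only [List.foldl_cons]
      refine isBST_foldl l _ (isBST_insert ht (hdisj x List.mem_cons_self))
        (List.Nodup.of_cons hnd) (fun z hz hm => ?_)
      rcases mem_insert_iff.mp hm with rfl | hm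
      · exact (List.nodup_cons.mp hnd).1 hz
      · exact hdisj z (List.mem_cons_of_mem _ hz) hm

end BTree

lemma ereal_sSup_lt_iff {A : Set ℝ} (hA : A.Finite) {x : ℝ} :
    sSup ((fun r : ℝ => (r : EReal)) '' A) < (x : EReal) ↔ ∀ a ∈ A, a < x := by
  rcases A.eq_empty_or_nonempty with rfl | hne
  · simp
  · constructor
    · intro h a ha
      have : ((a : ℝ) : EReal) ≤ sSup ((fun r : ℝ => (r : EReal)) '' A) :=
        le_sSup ⟨a, ha, rfl⟩
      exact_mod_cast lt_of_le_of_lt this h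
    · intro h
      obtain ⟨a, ha, hEq⟩ := Set.Nonempty.csSup_mem (hne.image (fun r : ℝ => (r : EReal))) (hA.image _)
      rw [← hEq]
      show ((a : ℝ) : EReal) < (x : EReal)
      exact_mod_cast h a ha

lemma ereal_lt_sInf_iff {A : Set ℝ} (hA : A.Finite) {x : ℝ} :
    (x : EReal) < sInf ((fun r : ℝ => (r : EReal)) '' A) ↔ ∀ a ∈ A, x < a := by
  rcases A.eq_empty_or_nonempty with rfl | hne
  · simp
  · constructor
    · intro h a ha
      have : sInf ((fun r : ℝ => (r : EReal)) '' A) ≤ ((a : ℝ) : EReal) :=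
        sInf_le ⟨a, ha, rfl⟩
      exact_mod_cast lt_of_lt_of_le h this
    · intro h
      obtain ⟨a, ha, hEq⟩ := Set.Nonempty.csInf_mem (hne.image (fun r : ℝ => (r : EReal))) (hA.image _)
      rw [← hEq]
      show (x : EReal) < ((a : ℝ) : EReal)
      exact_mod_cast h a ha

lemma mem_drop_take_iff {n : ℕ} {y : Fin n → ℝ} (hy : Function.Injective y) {i : Fin n}
    {c j : ℕ} : y i ∈ (((List.ofFn y).take j).drop c) ↔ c ≤ (i : ℕ) ∧ (i : ℕ) < j := by
  have hlen : (List.ofFn y).length = n := List.length_ofFn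
  constructor
  · intro h
    obtain ⟨m, hm, hget⟩ := List.mem_iff_getElem.mp h
    have hm' : c + m < min j n := by
      simp only [List.length_drop, List.length_take, hlen] at hm
      omega
    rw [List.getElem_drop, List.getElem_take, List.getElem_ofFn] at hget
    have := hy hget
    have hcoe : (i : ℕ) = c + m := by rw [← this]
    omega
  · rintro ⟨hc, hj⟩
    refine List.mem_iff_getElem.mpr ⟨(i : ℕ) - c, ?_, ?_⟩
    · simp only [List.length_drop, List.length_take, hlen]
      omega
    · rw [List.getElem_drop, List.getElem_take, List.getElem_ofFn]
      congr 1
      ext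
      simp
      omega

lemma mem_take_iff {n : ℕ} {y : Fin n → ℝ} (hy : Function.Injective y) {i : Fin n}
    {j : ℕ} : y i ∈ ((List.ofFn y).take j) ↔ (i : ℕ) < j := by
  rw [← (List.drop_zero : ((List.ofFn y).take j).drop 0 = _), mem_drop_take_iff hy]
  omega

lemma mem_drop_iff {n : ℕ} {y : Fin n → ℝ} (hy : Function.Injective y) {i : Fin n}
    {c : ℕ} : y i ∈ ((List.ofFn y).drop c) ↔ c ≤ (i : ℕ) := by
  have : (List.ofFn y).take n = List.ofFn y :=
    List.take_of_length_le (by rw [List.length_ofFn])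
  rw [← this, mem_drop_take_iff hy]
  have := i.isLt
  omega


/-- The tree after inserting the first `j` values. -/
noncomputable def Tpre {n : ℕ} (y : Fin n → ℝ) (j : ℕ) : BTree :=
  bstOfList ((List.ofFn y).take j)

section Main

variable {n : ℕ} {y : Fin n → ℝ}

lemma mem_Tpre (hy : Function.Injective y) {i : Fin n} {j : ℕ} :
    BTree.Mem (y i) (Tpre y j) ↔ (i : ℕ) < j := by
  rw [Tpre, bstOfList, BTree.mem_foldl]
  simp [BTree.Mem, mem_take_iff hy]

lemma mem_Tpre' {b : ℝ} {j : ℕ} (h : BTree.Mem b (Tpre y j)) : ∃ i : Fin n, y i = b := by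
  rw [Tpre, bstOfList, BTree.mem_foldl] at h
  rcases h with h | h
  · have : b ∈ List.ofFn y := List.mem_of_mem_take h
    rwa [List.mem_ofFn] at this
  · exact absurd h id

lemma isBST_Tpre (hy : Function.Injective y) (j : ℕ) : BTree.IsBST (Tpre y j) := by
  refine BTree.isBST_foldl _ _ trivial ?_ (fun x _ h => h)
  exact ((List.take_sublist _ _).nodup (List.nodup_ofFn.mpr hy))

lemma decomp_T (j : Fin n) :
    bstOfList (List.ofFn y) =
      ((List.ofFn y).drop ((j : ℕ) + 1)).foldl (fun t x => t.insert x)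
        (BTree.insert (y j) (Tpre y j)) := by
  have hj : (j : ℕ) < (List.ofFn y).length := by rw [List.length_ofFn]; exact j.isLt
  conv_lhs => rw [bstOfList, ← List.take_append_drop (j : ℕ) (List.ofFn y),
    List.drop_eq_getElem_cons hj]
  rw [List.foldl_append, List.foldl_cons]
  have : (List.ofFn y)[(j : ℕ)] = y j := by rw [List.getElem_ofFn]
  rw [this]
  rfl

lemma decomp_Tpre (k : Fin n) {j : ℕ} (hkj : (k : ℕ) < j) :
    Tpre y j = (((List.ofFn y).take j).drop ((k : ℕ) + 1)).foldl (fun t x => t.insert x)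
      (BTree.insert (y k) (Tpre y k)) := by
  have hk' : (k : ℕ) < ((List.ofFn y).take j).length := by
    rw [List.length_take, List.length_ofFn]; exact lt_min hkj k.isLt
  conv_lhs => rw [Tpre, bstOfList, ← List.take_append_drop (k : ℕ) ((List.ofFn y).take j),
    List.drop_eq_getElem_cons hk']
  rw [List.foldl_append, List.foldl_cons, List.take_take, min_eq_left hkj.le]
  have : ((List.ofFn y).take j)[(k : ℕ)] = y k := by
    rw [List.getElem_take, List.getElem_ofFn]
  rw [this]
  rfl

lemma anc_iff_s10 (hy : Function.Injective y) (j : Fin n) (c : ℝ) :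
    BTree.IsAncestor c (y j) (bstOfList (List.ofFn y))
      ↔ c ∈ BTree.onPath (y j) (Tpre y j) := by
  rw [decomp_T j]
  have hmem : BTree.Mem (y j) (BTree.insert (y j) (Tpre y j)) :=
    BTree.mem_insert_iff.mpr (Or.inl rfl)
  have hnot : y j ∉ (List.ofFn y).drop ((j : ℕ) + 1) := fun h => by
    have := (mem_drop_iff hy).mp h; omega
  have hjm : ¬ BTree.Mem (y j) (Tpre y j) := fun h => by
    have := (mem_Tpre hy).mp h; omega
  rw [BTree.isAncestor_foldl_of_mem _ _ hmem hnot, BTree.isAncestor_insert]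
  simp [BTree.not_isAncestor_of_not_mem hjm]

lemma anc_pre_iff (hy : Function.Injective y) (k : Fin n) {j : ℕ} (hkj : (k : ℕ) < j)
    (c : ℝ) :
    BTree.IsAncestor c (y k) (Tpre y j) ↔ c ∈ BTree.onPath (y k) (Tpre y k) := by
  rw [decomp_Tpre k hkj]
  have hmem : BTree.Mem (y k) (BTree.insert (y k) (Tpre y k)) :=
    BTree.mem_insert_iff.mpr (Or.inl rfl)
  have hnot : y k ∉ ((List.ofFn y).take j).drop ((k : ℕ) + 1) := fun h => by
    have := (mem_drop_take_iff hy).mp h; omega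
  have hkm : ¬ BTree.Mem (y k) (Tpre y k) := fun h => by
    have := (mem_Tpre hy).mp h; omega
  rw [BTree.isAncestor_foldl_of_mem _ _ hmem hnot, BTree.isAncestor_insert]
  simp [BTree.not_isAncestor_of_not_mem hkm]

end Main

/-- **Counting descendants in a binary search tree.** Let `y 0, …, y (n-1)` be distinct
reals, `T` their BST, and `u` the node labeled `y k`. The number of descendants of `u`
(including `u`) equals the number of indices `j ≥ k` with `y j ∈ (L(u), R(u))`, where
`L(u)` (resp. `R(u)`) is the largest ancestor label smaller than `y k` (resp. smallest
ancestor label larger than `y k`), `-∞` (resp. `+∞`) if there is none. -/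
theorem stmt10 {n : ℕ} (y : Fin n → ℝ) (hy : Function.Injective y) (k : Fin n) :
    {b : ℝ | b = y k ∨ BTree.IsAncestor (y k) b (bstOfList (List.ofFn y))}.ncard
      = {j : Fin n | k ≤ j ∧
          sSup ((fun r : ℝ => (r : EReal)) ''
              {r : ℝ | BTree.IsAncestor r (y k) (bstOfList (List.ofFn y)) ∧ r < y k})
            < ((y j : ℝ) : EReal) ∧
          ((y j : ℝ) : EReal)
            < sInf ((fun r : ℝ => (r : EReal)) ''
              {r : ℝ | BTree.IsAncestor r (y k) (bstOfList (List.ofFn y)) ∧ y k < r})}.ncard := by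
  classical
  set T := bstOfList (List.ofFn y) with hT
  set Anc := BTree.onPath (y k) (Tpre y k) with hAnc
  -- every element of Anc differs from y k and is some y i with i < k
  have hAncNe : ∀ c ∈ Anc, c ≠ y k := by
    intro c hc
    have hm := BTree.mem_of_onPath hc
    obtain ⟨i, rfl⟩ := mem_Tpre' hm
    have hik : (i : ℕ) < (k : ℕ) := (mem_Tpre hy).mp hm
    intro h
    have := hy h
    omega
  -- the two ancestor label sets
  set A := {r : ℝ | BTree.IsAncestor r (y k) T ∧ r < y k} with hA
  set B := {r : ℝ | BTree.IsAncestor r (y k) T ∧ y k < r} with hB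
  have hAanc : ∀ r, r ∈ A ↔ r ∈ Anc ∧ r < y k := by
    intro r; rw [hA, Set.mem_setOf_eq, anc_iff_s10 hy k r]
  have hBanc : ∀ r, r ∈ B ↔ r ∈ Anc ∧ y k < r := by
    intro r; rw [hB, Set.mem_setOf_eq, anc_iff_s10 hy k r]
  have hMemFin := BTree.setOf_mem_finite (Tpre y k)
  have hAncFin : Anc.Finite := hMemFin.subset (fun c hc => BTree.mem_of_onPath hc)
  have hAfin : A.Finite := hAncFin.subset (fun r hr => ((hAanc r).mp hr).1)
  have hBfin : B.Finite := hAncFin.subset (fun r hr => ((hBanc r).mp hr).1)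
  -- the sup/inf condition in terms of Anc
  have hcond : ∀ x : ℝ,
      (sSup ((fun r : ℝ => (r : EReal)) '' A) < (x : EReal) ∧
        (x : EReal) < sInf ((fun r : ℝ => (r : EReal)) '' B))
      ↔ ∀ c ∈ Anc, (c < y k ∧ c < x) ∨ (y k < c ∧ x < c) := by
    intro x
    rw [ereal_sSup_lt_iff hAfin, ereal_lt_sInf_iff hBfin]
    constructor
    · rintro ⟨h1, h2⟩ c hc
      rcases lt_trichotomy c (y k) with h | h | h
      · exact Or.inl ⟨h, h1 c ((hAanc c).mpr ⟨hc, h⟩)⟩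
      · exact absurd h (hAncNe c hc)
      · exact Or.inr ⟨h, h2 c ((hBanc c).mpr ⟨hc, h⟩)⟩
    · intro h
      constructor
      · intro c hc
        obtain ⟨hc1, hc2⟩ := (hAanc c).mp hc
        rcases h c hc1 with ⟨_, h'⟩ | ⟨h', _⟩
        · exact h'
        · exact absurd hc2 (not_lt.mpr h'.le)
      · intro c hc
        obtain ⟨hc1, hc2⟩ := (hBanc c).mp hc
        rcases h c hc1 with ⟨h', _⟩ | ⟨_, h'⟩
        · exact absurd hc2 (not_lt.mpr h'.le)
        · exact h'
  -- characterization of descendants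
  have hanc : ∀ j : Fin n, BTree.IsAncestor (y k) (y j) T
      ↔ ((k : ℕ) < (j : ℕ) ∧ ∀ c ∈ Anc, (c < y k ∧ c < y j) ∨ (y k < c ∧ y j < c)) := by
    intro j
    rw [hT, anc_iff_s10 hy j (y k)]
    by_cases hkj : (k : ℕ) < (j : ℕ)
    · have hmemk : BTree.Mem (y k) (Tpre y (j : ℕ)) := (mem_Tpre hy).mpr hkj
      have hnotj : ¬ BTree.Mem (y j) (Tpre y (j : ℕ)) := fun h => by
        have := (mem_Tpre hy).mp h; omega
      rw [BTree.onPath_iff (isBST_Tpre hy _) hnotj hmemk]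
      constructor
      · intro h
        exact ⟨hkj, fun c hc => h c ((anc_pre_iff hy k hkj c).mpr hc)⟩
      · rintro ⟨_, h⟩ c hc
        exact h c ((anc_pre_iff hy k hkj c).mp hc)
    · constructor
      · intro h
        have := (mem_Tpre hy).mp (BTree.mem_of_onPath h)
        omega
      · rintro ⟨h, _⟩
        exact absurd h hkj
  -- the index set
  set S := {j : Fin n | k ≤ j ∧
      sSup ((fun r : ℝ => (r : EReal)) '' A) < ((y j : ℝ) : EReal) ∧
      ((y j : ℝ) : EReal) < sInf ((fun r : ℝ => (r : EReal)) '' B)} with hS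
  have hkS : k ∈ S := by
    refine ⟨le_refl k, (hcond (y k)).mpr fun c hc => ?_⟩
    rcases lt_or_gt_of_ne (hAncNe c hc) with h | h
    · exact Or.inl ⟨h, h⟩
    · exact Or.inr ⟨h, h⟩
  have himg : {b : ℝ | b = y k ∨ BTree.IsAncestor (y k) b T} = y '' S := by
    ext b
    simp only [Set.mem_setOf_eq, Set.mem_image]
    constructor
    · rintro (rfl | hb)
      · exact ⟨k, hkS, rfl⟩
      · obtain ⟨j, rfl⟩ : ∃ j : Fin n, y j = b := by
          have hm : BTree.Mem b T := BTree.mem_of_isAncestor hb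
          rw [hT, bstOfList, BTree.mem_foldl] at hm
          rcases hm with hm | hm
          · rwa [List.mem_ofFn] at hm
          · exact absurd hm id
        obtain ⟨hkj, hc⟩ := (hanc j).mp hb
        refine ⟨j, ⟨?_, (hcond (y j)).mpr hc⟩, rfl⟩
        rw [Fin.le_def]; omega
    · rintro ⟨j, ⟨hkj, h1, h2⟩, rfl⟩
      rcases eq_or_lt_of_le hkj with h | h
      · exact Or.inl (by rw [← h])
      · refine Or.inr ((hanc j).mpr ⟨?_, (hcond (y j)).mp ⟨h1, h2⟩⟩)
        rw [Fin.lt_def] at h; omega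
  rw [himg, Set.ncard_image_of_injective _ hy]
end
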